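/- arXiv:2205.09210 — 2 statements merged into one kernel-verified Lean document; each statement's English description precedes it below -/
import Mathlib

section
/- Let G and H be reflexive undirected graphs, α : G → H a homomorphism, and let C be an α-tight closed walk in G (i.e., the image walk α(C) is cyclically reduced). Then every vertex of C is frozen for every H-recoloring sequence starting at α (in the Hom₁ sense) that satisfies the push-or-pull property; that is, no such sequence ever changes the color of a vertex of C. -/
namespace HRecoloring

/-- A digraph: a vertex type together with an arc relation. -/
structure Dgraph (V : Type) where
  Adj : V → V → Prop

variable {V X : Type}

/-- Adjacency in the underlying undirected graph. -/
def Dgraph.UAdj (G : Dgraph V) (u v : V) : Prop := G.Adj u v ∨ G.Adj v u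

/-- A digraph is loopless if it has no arc `v → v`. -/
def Dgraph.Loopless (G : Dgraph V) : Prop := ∀ v, ¬ G.Adj v v

/-- A digraph is reflexive if `v → v` for every vertex `v`. -/
def Dgraph.IsReflexive (G : Dgraph V) : Prop := ∀ v, G.Adj v v

/-- A symmetric digraph, which we identify with an undirected graph. -/
def Dgraph.IsSymmetric (G : Dgraph V) : Prop := ∀ u v, G.Adj u v → G.Adj v u

/-- The underlying undirected graph, as a symmetric digraph. -/
def Dgraph.usym (G : Dgraph V) : Dgraph V := ⟨fun u v => G.UAdj u v⟩

/-- A (di)graph homomorphism. -/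
def IsHom (G : Dgraph V) (H : Dgraph X) (f : V → X) : Prop :=
  ∀ ⦃u v⦄, G.Adj u v → H.Adj (f u) (f v)

/-- A walk from `a` to `b`, encoded by its list of successive vertices.
A walk in a digraph is a walk in its underlying undirected graph. -/
def IsWalk (G : Dgraph V) (a b : V) (l : List V) : Prop :=
  l ≠ [] ∧ l.head? = some a ∧ l.getLast? = some b ∧ l.Chain' G.UAdj

/-- Weak connectivity. -/
def Dgraph.WConn (G : Dgraph V) : Prop := ∀ u v : V, ∃ l, IsWalk G u v l

/-- Concatenation of two walks sharing an endpoint. -/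
def wcomp (l₁ l₂ : List V) : List V := l₁ ++ l₂.tail

/-- Number of edges of a walk. -/
def wlen (l : List V) : ℕ := l.length - 1

/-- One reduction step on walks: delete a backtracking pair `(x y)(y x)` or a
one-edge loop step `(x x)`. -/
def RStep (l l' : List V) : Prop :=
  (∃ (p s : List V) (x y : V), l = p ++ [x, y, x] ++ s ∧ l' = p ++ [x] ++ s) ∨
  (∃ (p s : List V) (x : V), l = p ++ [x, x] ++ s ∧ l' = p ++ [x] ++ s)

/-- Equality of walks in the fundamental groupoid `π(H)`: the equivalence
generated by reduction steps (two walks are equal in `π(H)` iff they reduce to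
the same reduced walk). -/
def PiEq (l l' : List V) : Prop := Relation.EqvGen RStep l l'

/-- A walk is reduced if no reduction step applies to it. -/
def IsReduced (l : List V) : Prop := ∀ l', ¬ RStep l l'

/-- A closed walk is cyclically reduced if it is reduced and its first and last
edges are not inverses of each other. -/
def IsCycReduced (l : List V) : Prop :=
  IsReduced l ∧ ∃ h : 2 ≤ l.length,
    l.get ⟨1, by omega⟩ ≠ l.get ⟨l.length - 2, by omega⟩

/-- `n`-fold concatenation of a closed walk `R` based at `h`. -/
def witer (R : List V) (h : V) : ℕ → List V
  | 0 => [h]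
  | n + 1 => wcomp R (witer R h n)

/-- `Rⁿ` for an integer `n`, for a closed walk `R` based at `h`; for `n < 0`
this is the `|n|`-fold concatenation of the reversed walk `R⁻¹`. -/
def zpowWalk (R : List V) (h : V) (n : ℤ) : List V :=
  if 0 ≤ n then witer R h n.toNat else witer R.reverse h (-n).toNat

/-- A walk is symmetric if every edge it traverses is a symmetric arc. -/
def IsSymWalk (H : Dgraph X) (l : List X) : Prop :=
  l.Chain' fun a b => H.Adj a b ∧ H.Adj b a

/-- The conjugated walk `α(W)⁻¹ · Q · β(W)`. -/
def conj (α β : V → X) (Wl : List V) (Q : List X) : List X :=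
  wcomp (wcomp (Wl.map α).reverse Q) (Wl.map β)

/-- Topological validity of a walk `Q` from `α q` to `β q`:
`β(C) = Q⁻¹ · α(C) · Q` in `π(H)` for every closed walk `C` at `q`. -/
def TopValid (G : Dgraph V) (H : Dgraph X) (α β : V → X) (q : V) (Q : List X) : Prop :=
  ∀ C : List V, IsWalk G q q C →
    PiEq (C.map β) (wcomp (wcomp Q.reverse (C.map α)) Q)

/-- IN-zigzag pattern `a₁ ← a₂ → a₃ ← … ← a_{n-1} → a_n`. -/
def INCompatible (H : Dgraph X) (l : List X) : Prop :=
  ∀ (i : ℕ) (h : i + 1 < l.length),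
    if i % 2 = 0 then H.Adj (l.get ⟨i + 1, h⟩) (l.get ⟨i, by omega⟩)
    else H.Adj (l.get ⟨i, by omega⟩) (l.get ⟨i + 1, h⟩)

/-- OUT-zigzag pattern `a₁ → a₂ ← a₃ → … → a_{n-1} ← a_n`. -/
def OUTCompatible (H : Dgraph X) (l : List X) : Prop :=
  ∀ (i : ℕ) (h : i + 1 < l.length),
    if i % 2 = 0 then H.Adj (l.get ⟨i, by omega⟩) (l.get ⟨i + 1, h⟩)
    else H.Adj (l.get ⟨i + 1, h⟩) (l.get ⟨i, by omega⟩)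

/-- A vertex is of type IN if it has an in-neighbor. -/
def TypeIN (G : Dgraph V) (v : V) : Prop := ∃ u, G.Adj u v

/-- A vertex is of type OUT if it has an out-neighbor. -/
def TypeOUT (G : Dgraph V) (v : V) : Prop := ∃ u, G.Adj v u

/-- A vertex is of type SYM if it is of type IN and of type OUT. -/
def TypeSYM (G : Dgraph V) (v : V) : Prop := TypeIN G v ∧ TypeOUT G v

/-- The zigzag condition for the vertex `v`. -/
def Zigzag (G : Dgraph V) (H : Dgraph X) (v : V) (l : List X) : Prop :=
  (TypeIN G v → INCompatible H l) ∧ (TypeOUT G v → OUTCompatible H l)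

/-- A recoloring sequence: a nonempty sequence of homomorphisms in which
consecutive homomorphisms differ on exactly one vertex. -/
def IsRecolSeq (G : Dgraph V) (H : Dgraph X) (σs : List (V → X)) : Prop :=
  σs ≠ [] ∧ (∀ σ ∈ σs, IsHom G H σ) ∧ σs.Chain' fun σ σ' => ∃! u, σ u ≠ σ' u

/-- The monochromatic neighborhood property: whenever a vertex changes its
color, all of its neighbors (in the underlying undirected graph) have one
common color. -/
def MonoNbhd (G : Dgraph V) (σs : List (V → X)) : Prop :=
  σs.Chain' fun σ σ' => ∀ v, σ v ≠ σ' v → ∃ h, ∀ w, G.UAdj v w → σ w = h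

/-- `VWalk G v σs S`: `S` is the vertex walk `S(v)` of the recoloring sequence
`σs`; each color change of `v` from `a` to `b`, while all neighbors of `v` are
colored `h`, contributes the two edges `(a h)(h b)`. -/
inductive VWalk (G : Dgraph V) (v : V) : List (V → X) → List X → Prop
  | single (σ : V → X) : VWalk G v [σ] [σ v]
  | stay {σ σ' : V → X} {rest : List (V → X)} {l : List X} :
      σ v = σ' v → VWalk G v (σ' :: rest) l → VWalk G v (σ :: σ' :: rest) l
  | move {σ σ' : V → X} {rest : List (V → X)} {l : List X} (h : X) :
      σ v ≠ σ' v → (∀ w, G.UAdj v w → σ w = h) →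
      VWalk G v (σ' :: rest) l → VWalk G v (σ :: σ' :: rest) (σ v :: h :: l)

/-- `H`-realizability of a walk `Q` via recoloring sequences satisfying the
monochromatic neighborhood property: `Q = S(q)` in `π(H)`. -/
def MRealizable (G : Dgraph V) (H : Dgraph X) (α β : V → X) (q : V) (Q : List X) : Prop :=
  ∃ (σs : List (V → X)) (Sq : List X),
    IsRecolSeq G H σs ∧ σs.head? = some α ∧ σs.getLast? = some β ∧
    MonoNbhd G σs ∧ VWalk G q σs Sq ∧ PiEq Sq Q

/-- Orientation compatibility of a walk `Q`: every generated vertex walk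
satisfies the zigzag condition. -/
def OrientCompatible (G : Dgraph V) (H : Dgraph X) (α β : V → X) (q : V) (Q : List X) : Prop :=
  ∀ (v : V) (Wl : List V), IsWalk G q v Wl →
    ∀ S : List X, IsReduced S → PiEq (conj α β Wl Q) S → Zigzag G H v S

/-- Hom₁-adjacency: the homomorphisms differ on exactly one vertex and, for
every arc `x → y` of `G`, both `φ x → ψ y` and `ψ x → φ y` are arcs of `H`. -/
def Hom1Adj (G : Dgraph V) (H : Dgraph X) (φ ψ : V → X) : Prop :=
  (∃! u, φ u ≠ ψ u) ∧ ∀ ⦃x y⦄, G.Adj x y → H.Adj (φ x) (ψ y) ∧ H.Adj (ψ x) (φ y)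

/-- A recoloring sequence in the Hom₁ sense (digraphs). -/
def Hom1Seq (G : Dgraph V) (H : Dgraph X) (σs : List (V → X)) : Prop :=
  σs ≠ [] ∧ (∀ σ ∈ σs, IsHom G H σ) ∧ σs.Chain' (Hom1Adj G H)

/-- A recoloring sequence in which each step recolors exactly one vertex to an
adjacent color (the Hom₁ sense for reflexive undirected graphs). -/
def AdjRecolSeq (G : Dgraph V) (H : Dgraph X) (σs : List (V → X)) : Prop :=
  σs ≠ [] ∧ (∀ σ ∈ σs, IsHom G H σ) ∧
  σs.Chain' fun σ σ' => (∃! u, σ u ≠ σ' u) ∧ ∀ u, σ u ≠ σ' u → H.Adj (σ u) (σ' u)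

/-- The push-or-pull property: whenever a vertex changes its color from `a` to
`b`, every neighbor of that vertex has color `a` or `b`. -/
def PushOrPull (G : Dgraph V) (σs : List (V → X)) : Prop :=
  σs.Chain' fun σ σ' => ∀ u, σ u ≠ σ' u → ∀ w, G.UAdj u w → σ w = σ u ∨ σ w = σ' u

/-- The walk of successive colors of `v` along a recoloring sequence. -/
def colorWalk (σs : List (V → X)) (v : V) : List X := σs.map fun σ => σ v

/-- `H`-realizability via recoloring sequences (reflexive undirected Hom₁
sense) satisfying the push-or-pull property. -/
def PRealizable (G : Dgraph V) (H : Dgraph X) (α β : V → X) (q : V) (Q : List X) : Prop :=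
  ∃ σs : List (V → X), AdjRecolSeq G H σs ∧ σs.head? = some α ∧ σs.getLast? = some β ∧
    PushOrPull G σs ∧ PiEq (colorWalk σs q) Q

/-- `H`-realizability via Hom₁ recoloring sequences of digraphs satisfying the
push-or-pull property. -/
def DRealizable (G : Dgraph V) (H : Dgraph X) (α β : V → X) (q : V) (Q : List X) : Prop :=
  ∃ σs : List (V → X), Hom1Seq G H σs ∧ σs.head? = some α ∧ σs.getLast? = some β ∧
    PushOrPull G σs ∧ PiEq (colorWalk σs q) Q

/-- `H` contains no 4-cycle of algebraic girth 0 as a subgraph (neither of the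
two orientations of the 4-cycle with two forward and two backward arcs). -/
def NoZeroGirthC4 (H : Dgraph X) : Prop :=
  ∀ a b c d : X, a ≠ b → a ≠ c → a ≠ d → b ≠ c → b ≠ d → c ≠ d →
    ¬(H.Adj a b ∧ H.Adj b d ∧ H.Adj a c ∧ H.Adj c d) ∧
    ¬(H.Adj a b ∧ H.Adj d b ∧ H.Adj a c ∧ H.Adj d c)

/-- `H` contains no triangle of algebraic girth 1 as a subgraph. -/
def NoOneGirthTriangle (H : Dgraph X) : Prop :=
  ∀ x y z : X, x ≠ y → y ≠ z → x ≠ z → ¬(H.Adj x y ∧ H.Adj y z ∧ H.Adj x z)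

/-- A path in the reconfiguration graph `R_H(G)` from `α` to `β`. -/
def IsRPath (G : Dgraph V) (H : Dgraph X) (α β : V → X) (L : List (V → X)) : Prop :=
  L ≠ [] ∧ L.head? = some α ∧ L.getLast? = some β ∧
  (∀ σ ∈ L, IsHom G H σ) ∧ L.Chain' fun φ ψ => ∃! u, φ u ≠ ψ u

/-- A path in the graph `Hom₁(G, H)` from `α` to `β`. -/
def IsHom1Path (G : Dgraph V) (H : Dgraph X) (α β : V → X) (L : List (V → X)) : Prop :=
  L ≠ [] ∧ L.head? = some α ∧ L.getLast? = some β ∧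
  (∀ σ ∈ L, IsHom G H σ) ∧ L.Chain' (Hom1Adj G H)

/-- The set of reduced walks `Q` from `α q` to `β q` that generate symmetric
vertex walks on `V'` with the system of walks `Wf`. -/
def SymGenSet (H : Dgraph X) (α β : V → X) (q : V)
    (V' : Set V) (Wf : V → List V) : Set (List X) :=
  {Q | IsWalk H (α q) (β q) Q ∧ IsReduced Q ∧
    ∀ v ∈ V', ∀ S : List X, IsReduced S → PiEq (conj α β (Wf v) Q) S → IsSymWalk H S}

/-- The set of orientation-compatible walks for `q` and the system `Uf`. -/
def OCSet (G : Dgraph V) (H : Dgraph X) (α β : V → X) (q : V)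
    (Uf : V → List V) : Set (List X) :=
  {Q | IsWalk H (α q) (β q) Q ∧ IsReduced Q ∧ Even (wlen Q) ∧
    ∀ (v : V) (S : List X), IsReduced S → PiEq (conj α β (Uf v) Q) S → Zigzag G H v S}

/-- The set `Π_q` of walks from `α q` to `β q` that are `H`-realizable via
recoloring sequences satisfying the monochromatic neighborhood property. -/
def MRealSet (G : Dgraph V) (H : Dgraph X) (α β : V → X) (q : V) : Set (List X) :=
  {Q | IsWalk H (α q) (β q) Q ∧ IsReduced Q ∧ MRealizable G H α β q Q}

/-- The set of walks from `α q` to `β q` that are `H`-realizable via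
recoloring sequences satisfying the push-or-pull property. -/
def PRealSet (G : Dgraph V) (H : Dgraph X) (α β : V → X) (q : V) : Set (List X) :=
  {Q | IsWalk H (α q) (β q) Q ∧ IsReduced Q ∧ PRealizable G H α β q Q}

/-- Ceiling division on natural numbers. -/
def cdiv (a b : ℕ) : ℕ := (a + b - 1) / b

section Aux
variable {V X : Type}

lemma getElem_idx_congr (l : List V) {i j : ℕ} (hij : i = j) (hj : j < l.length) :
    l[i]'(hij ▸ hj) = l[j] := by subst hij; rfl

lemma decomp2 (l : List V) (j : ℕ) (h : j + 1 < l.length) :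
    l = l.take j ++ [l[j], l[j+1]] ++ l.drop (j+2) := by
  have h1 := List.getElem_cons_drop (as := l) (i := j) (by omega)
  have h2 := List.getElem_cons_drop (as := l) (i := j+1) h
  have h3 := List.take_append_drop j l
  rw [← h1, ← h2] at h3
  simpa using h3.symm

lemma reduced_ne1 {l : List X} (h : IsReduced l) {j k : ℕ} (hk : k < l.length)
    (hjk : j + 1 = k) : l[j]'(by omega) ≠ l[k] := by
  subst hjk
  intro he
  apply h (l.take j ++ [l[j]'(by omega)] ++ l.drop (j+2))
  right
  refine ⟨l.take j, l.drop (j+2), l[j]'(by omega), ?_, by simp⟩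
  have h3 := decomp2 l j hk
  rw [← he] at h3
  simpa using h3

lemma decomp3 (l : List V) (j : ℕ) (h : j + 2 < l.length) :
    l = l.take j ++ [l[j], l[j+1], l[j+2]] ++ l.drop (j+3) := by
  have h1 := List.getElem_cons_drop (as := l) (i := j) (by omega)
  have h2 := List.getElem_cons_drop (as := l) (i := j+1) (by omega)
  have h3 := List.getElem_cons_drop (as := l) (i := j+2) h
  have h4 := List.take_append_drop j l
  rw [← h1, ← h2, ← h3] at h4
  simpa using h4.symm

lemma reduced_ne2 {l : List X} (h : IsReduced l) {j k : ℕ} (hk : k < l.length)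
    (hjk : j + 2 = k) : l[j]'(by omega) ≠ l[k] := by
  subst hjk
  intro he
  apply h (l.take j ++ [l[j]'(by omega)] ++ l.drop (j+3))
  left
  refine ⟨l.take j, l.drop (j+3), l[j]'(by omega), l[j+1]'(by omega), ?_, by simp⟩
  have h4 := decomp3 l j hk
  rw [← he] at h4
  simpa using h4

lemma step_lemma (G : Dgraph V) (α : V → X) (v₀ : V) (C : List V)
    (hC : IsWalk G v₀ v₀ C) (htight : IsCycReduced (C.map α))
    (σ σ' : V → X)
    (hppl : ∀ u, σ u ≠ σ' u → ∀ w, G.UAdj u w → σ w = σ u ∨ σ w = σ' u)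
    (hag : ∀ v ∈ C, σ v = α v) : ∀ v ∈ C, σ' v = α v := by
  obtain ⟨hne, hhd, hlast, hchain⟩ := hC
  obtain ⟨hred, h2, hcyc0⟩ := htight
  have hn2 : 2 ≤ C.length := by simpa using h2
  have hC0 : C[0]'(by omega) = v₀ := by
    rw [List.head?_eq_head hne, ← List.getElem_zero (l := C) (by omega)] at hhd
    exact Option.some_injective _ hhd
  have hClast : C[C.length-1]'(by omega) = v₀ := by
    rw [List.getLast?_eq_getLast (l := C) hne, List.getLast_eq_getElem] at hlast
    exact Option.some_injective _ hlast
  have hadj : ∀ j k : ℕ, ∀ (hk : k < C.length) (hjk : j + 1 = k),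
      G.UAdj (C[j]'(by omega)) (C[k]'(by omega)) := by
    intro j k hk hjk
    subst hjk
    have := List.isChain_iff_getElem.1 hchain j (by omega)
    simpa using this
  have hne1 : ∀ j k : ℕ, ∀ (hk : k < C.length) (hjk : j + 1 = k),
      α (C[j]'(by omega)) ≠ α (C[k]'(by omega)) := by
    intro j k hk hjk h
    exact reduced_ne1 hred (by simpa using hk) hjk (by simpa using h)
  have hne2 : ∀ j k : ℕ, ∀ (hk : k < C.length) (hjk : j + 2 = k),
      α (C[j]'(by omega)) ≠ α (C[k]'(by omega)) := by
    intro j k hk hjk h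
    exact reduced_ne2 hred (by simpa using hk) hjk (by simpa using h)
  have hcyc : α (C[1]'(by omega)) ≠ α (C[C.length-2]'(by omega)) := by
    intro h
    apply hcyc0
    simp only [List.get_eq_getElem, List.getElem_map, List.length_map]
    exact h
  have hn3 : 3 ≤ C.length := by
    by_contra h
    apply hcyc
    have a : C[1]'(by omega) = v₀ := by
      rw [getElem_idx_congr C (show (1:ℕ) = C.length - 1 from by omega) (by omega), hClast]
    have b : C[C.length-2]'(by omega) = v₀ := by
      rw [getElem_idx_congr C (show C.length - 2 = 0 from by omega) (by omega), hC0]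
    rw [a, b]
  intro v hv
  by_cases hvv : σ' v = σ v
  · rw [hvv]; exact hag v hv
  have hvne : σ v ≠ σ' v := fun h => hvv h.symm
  exfalso
  have hpp' := hppl v hvne
  obtain ⟨i, hiN, hieq⟩ := List.getElem_of_mem hv
  by_cases hb : i = 0 ∨ i = C.length - 1
  · have hv0 : v = v₀ := by
      rcases hb with rfl | rfl
      · rw [← hieq]; exact hC0
      · rw [← hieq]; exact hClast
    have mem1 : C[1]'(by omega) ∈ C := List.getElem_mem _
    have mem2 : C[C.length-2]'(by omega) ∈ C := List.getElem_mem _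
    have adj1 : G.UAdj v (C[1]'(by omega)) := by
      rw [hv0, ← hC0]; exact hadj 0 1 (by omega) rfl
    have adj2 : G.UAdj v (C[C.length-2]'(by omega)) := by
      rw [hv0, ← hClast]
      exact Or.symm (hadj (C.length-2) (C.length-1) (by omega) (by omega))
    have e1 : σ (C[1]'(by omega)) = σ' v := by
      rcases hpp' _ adj1 with h | h
      · exfalso
        apply hne1 0 1 (by omega) rfl
        rw [hC0, ← hv0, ← hag _ hv, ← hag _ mem1]
        exact h.symm
      · exact h
    have e2 : σ (C[C.length-2]'(by omega)) = σ' v := by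
      rcases hpp' _ adj2 with h | h
      · exfalso
        apply hne1 (C.length-2) (C.length-1) (by omega) (by omega)
        rw [hClast, ← hv0, ← hag _ mem2, ← hag _ hv]
        exact h
      · exact h
    apply hcyc
    rw [← hag _ mem1, ← hag _ mem2, e1, e2]
  · push_neg at hb
    obtain ⟨hb0, hbn⟩ := hb
    obtain ⟨j, rfl⟩ : ∃ j, i = j + 1 := ⟨i - 1, by omega⟩
    have hj2 : j + 2 < C.length := by omega
    have mem1 : C[j]'(by omega) ∈ C := List.getElem_mem _
    have mem2 : C[j+2]'(by omega) ∈ C := List.getElem_mem _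
    have adj1 : G.UAdj v (C[j]'(by omega)) := by
      rw [← hieq]; exact Or.symm (hadj j (j+1) (by omega) rfl)
    have adj2 : G.UAdj v (C[j+2]'(by omega)) := by
      rw [← hieq]; exact hadj (j+1) (j+2) hj2 rfl
    have e1 : σ (C[j]'(by omega)) = σ' v := by
      rcases hpp' _ adj1 with h | h
      · exfalso
        apply hne1 j (j+1) (by omega) rfl
        rw [hieq, ← hag _ mem1, ← hag _ hv]
        exact h
      · exact h
    have e2 : σ (C[j+2]'(by omega)) = σ' v := by
      rcases hpp' _ adj2 with h | h
      · exfalso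
        apply hne1 (j+1) (j+2) hj2 rfl
        rw [hieq, ← hag _ hv, ← hag _ mem2]
        exact h.symm
      · exact h
    apply hne2 j (j+2) hj2 rfl
    rw [← hag _ mem1, ← hag _ mem2, e1, e2]

end Aux
end HRecoloring

open HRecoloring
/-- The vertices of an `α`-tight closed walk are frozen for every
`H`-recoloring sequence starting at `α` (in the Hom₁ sense) satisfying the
push-or-pull property. -/
theorem statement14 {V X : Type} [Fintype V] [Fintype X]
    (G : Dgraph V) (H : Dgraph X)
    (hGrefl : G.IsReflexive) (hGsym : G.IsSymmetric)
    (hHrefl : H.IsReflexive) (hHsym : H.IsSymmetric)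
    (hGconn : G.WConn) (hHconn : H.WConn)
    (α : V → X) (hα : IsHom G H α)
    (v₀ : V) (C : List V) (hC : IsWalk G v₀ v₀ C)
    (htight : IsCycReduced (C.map α))
    (σs : List (V → X)) (hseq : AdjRecolSeq G H σs)
    (hhead : σs.head? = some α) (hpp : PushOrPull G σs) :
    ∀ v ∈ C, ∀ σ ∈ σs, σ v = α v := by
  have hchainAll : σs.Chain' fun σ σ' => (∃! u, σ u ≠ σ' u) ∧
      ∀ u, σ u ≠ σ' u → ∀ w, G.UAdj u w → σ w = σ u ∨ σ w = σ' u := by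
    refine List.isChain_iff_getElem.2 ?_
    intro i h
    obtain ⟨-, -, hch⟩ := hseq
    exact ⟨(List.isChain_iff_getElem.1 hch i h).1, List.isChain_iff_getElem.1 hpp i h⟩
  have key : ∀ m (hm : m < σs.length), ∀ v ∈ C, σs[m] v = α v := by
    intro m
    induction m with
    | zero =>
      intro hm v hv
      have hne : σs ≠ [] := hseq.1
      rw [List.head?_eq_head hne, ← List.getElem_zero (l := σs) (by omega)] at hhead
      rw [Option.some_injective _ hhead]
    | succ m ih =>
      intro hm
      have hrel := List.isChain_iff_getElem.1 hchainAll m (by omega)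
      exact step_lemma G α v₀ C hC htight _ _ hrel.2 (ih (by omega))
  intro v hv σ hσ
  obtain ⟨m, hm, rfl⟩ := List.getElem_of_mem hσ
  exact key m hm v hv
end

section
/- Let G and H be reflexive undirected graphs, α, β : G → H homomorphisms, q ∈ V(G), and let Q be a reduced walk from α(q) to β(q). Then Q is H-realizable for α, β, q (i.e., Q = S(q) for some H-recoloring sequence S from α to β in the Hom₁ sense satisfying the push-or-pull property) if and only if both of the following hold: (1) Q is topologically valid for α, β, q; and (2) for every α-tight closed walk in G, every vertex v on this walk, and every walk W from v to q in G, Q = α(W)⁻¹ · β(W) in π(H). -/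
namespace HRecoloring

variable {V X : Type}

/-! ### Auxiliary development -/

section Compat
variable {α β : Type*} {R : α → α → Prop}

@[simp] theorem List.chain'_iff_isChain {l : List α} :
    List.Chain' R l ↔ List.IsChain R l := Iff.rfl

theorem List.chain'_cons {x y : α} {l : List α} :
    List.Chain' R (x :: y :: l) ↔ R x y ∧ List.Chain' R (y :: l) := List.isChain_cons_cons

theorem List.chain'_cons' {x : α} {l : List α} :
    List.Chain' R (x :: l) ↔ (∀ y ∈ l.head?, R x y) ∧ List.Chain' R l := List.isChain_cons

theorem List.chain'_append {l₁ l₂ : List α} :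
    List.Chain' R (l₁ ++ l₂) ↔ List.Chain' R l₁ ∧ List.Chain' R l₂ ∧
      ∀ x ∈ l₁.getLast?, ∀ y ∈ l₂.head?, R x y := List.isChain_append

theorem List.chain'_reverse {l : List α} :
    List.Chain' R l.reverse ↔ List.Chain' (flip R) l := List.isChain_reverse

theorem List.chain'_singleton (a : α) : List.Chain' R [a] := List.isChain_singleton a

theorem List.chain'_map_of_chain' {S : β → β → Prop} (f : α → β)
    (H : ∀ a b, R a b → S (f a) (f b)) {l : List α} (p : List.Chain' R l) :
    List.Chain' S (l.map f) := List.isChain_map_of_isChain f H p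

theorem List.chain'_iff_get {l : List α} : List.Chain' R l ↔
    ∀ (i : ℕ) (h : i < l.length - 1), R (l.get ⟨i, by omega⟩) (l.get ⟨i + 1, by omega⟩) := by
  rw [List.chain'_iff_isChain, List.isChain_iff_getElem]
  constructor
  · intro h i hi; exact h i (by omega)
  · intro h i hi; exact h i (by omega)

theorem List.get_map (f : α → β) {l : List α} {n : Fin (l.map f).length} :
    (l.map f).get n = f (l.get ⟨n, by simpa using n.2⟩) := by simp

theorem List.getLast_eq_get (l : List α) (h : l ≠ []) :
    l.getLast h = l.get ⟨l.length - 1, by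
      cases l with
      | nil => exact absurd rfl h
      | cons a t => simp⟩ := by
  simp [List.getLast_eq_getElem]

end Compat

section Aux1
variable {V : Type}

open Classical in
/-- One "prepend and reduce" step. -/
noncomputable def rstep1 (x : V) (r : List V) : List V :=
  match r with
  | [] => [x]
  | y :: ys => if x = y then y :: ys else if ys.head? = some x then ys else x :: y :: ys

noncomputable def nf : List V → List V
  | [] => []
  | x :: l => rstep1 x (nf l)

lemma rstep_xyx (p s : List V) (x y : V) :
    RStep (p ++ [x, y, x] ++ s) (p ++ [x] ++ s) := Or.inl ⟨p, s, x, y, rfl, rfl⟩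

lemma rstep_xx (p s : List V) (x : V) :
    RStep (p ++ [x, x] ++ s) (p ++ [x] ++ s) := Or.inr ⟨p, s, x, rfl, rfl⟩

lemma pe_xyx (p s : List V) (x y : V) :
    PiEq (p ++ [x, y, x] ++ s) (p ++ [x] ++ s) :=
  Relation.EqvGen.rel _ _ (rstep_xyx p s x y)

lemma pe_xx (p s : List V) (x : V) :
    PiEq (p ++ [x, x] ++ s) (p ++ [x] ++ s) :=
  Relation.EqvGen.rel _ _ (rstep_xx p s x)

lemma pe_refl (l : List V) : PiEq l l := Relation.EqvGen.refl l

lemma PiEq.symm {l l' : List V} (h : PiEq l l') : PiEq l' l := Relation.EqvGen.symm _ _ h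

lemma PiEq.trans {l₁ l₂ l₃ : List V} (h : PiEq l₁ l₂) (h' : PiEq l₂ l₃) : PiEq l₁ l₃ :=
  Relation.EqvGen.trans _ _ _ h h'

lemma RStep.append_right {l l' : List V} (h : RStep l l') (t : List V) :
    RStep (l ++ t) (l' ++ t) := by
  rcases h with ⟨p, s, x, y, rfl, rfl⟩ | ⟨p, s, x, rfl, rfl⟩
  · exact Or.inl ⟨p, s ++ t, x, y, by simp, by simp⟩
  · exact Or.inr ⟨p, s ++ t, x, by simp, by simp⟩

lemma RStep.append_left {l l' : List V} (h : RStep l l') (t : List V) :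
    RStep (t ++ l) (t ++ l') := by
  rcases h with ⟨p, s, x, y, rfl, rfl⟩ | ⟨p, s, x, rfl, rfl⟩
  · exact Or.inl ⟨t ++ p, s, x, y, by simp, by simp⟩
  · exact Or.inr ⟨t ++ p, s, x, by simp, by simp⟩

lemma RStep.cons {l l' : List V} (h : RStep l l') (x : V) :
    RStep (x :: l) (x :: l') := by
  simpa using h.append_left [x]

lemma pe_app_right {l l' : List V} (h : PiEq l l') (t : List V) :
    PiEq (l ++ t) (l' ++ t) := by
  induction h with
  | rel a b hab => exact Relation.EqvGen.rel _ _ (hab.append_right t)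
  | refl a => exact pe_refl _
  | symm a b _ ih => exact ih.symm
  | trans a b c _ _ ih₁ ih₂ => exact ih₁.trans ih₂

lemma pe_app_left {l l' : List V} (h : PiEq l l') (t : List V) :
    PiEq (t ++ l) (t ++ l') := by
  induction h with
  | rel a b hab => exact Relation.EqvGen.rel _ _ (hab.append_left t)
  | refl a => exact pe_refl _
  | symm a b _ ih => exact ih.symm
  | trans a b c _ _ ih₁ ih₂ => exact ih₁.trans ih₂

lemma pe_cons {l l' : List V} (h : PiEq l l') (x : V) :
    PiEq (x :: l) (x :: l') := by
  simpa using pe_app_left h [x]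

lemma RStep.head? {l l' : List V} (h : RStep l l') : l.head? = l'.head? := by
  rcases h with ⟨p, s, x, y, rfl, rfl⟩ | ⟨p, s, x, rfl, rfl⟩ <;> cases p <;> simp

lemma RStep.getLast? {l l' : List V} (h : RStep l l') : l.getLast? = l'.getLast? := by
  rcases h with ⟨p, s, x, y, rfl, rfl⟩ | ⟨p, s, x, rfl, rfl⟩ <;>
    rcases s.eq_nil_or_concat with rfl | ⟨s', z, rfl⟩ <;>
    simp [List.getLast?_append]

lemma PiEq.head? {l l' : List V} (h : PiEq l l') : l.head? = l'.head? := by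
  induction h with
  | rel a b hab => exact hab.head?
  | refl a => rfl
  | symm a b _ ih => exact ih.symm
  | trans a b c _ _ ih₁ ih₂ => exact ih₁.trans ih₂

lemma PiEq.getLast? {l l' : List V} (h : PiEq l l') : l.getLast? = l'.getLast? := by
  induction h with
  | rel a b hab => exact hab.getLast?
  | refl a => rfl
  | symm a b _ ih => exact ih.symm
  | trans a b c _ _ ih₁ ih₂ => exact ih₁.trans ih₂

lemma chain'_mid3 {R : V → V → Prop} {x y : V} {s : List V}
    (h : List.Chain' R (x :: y :: x :: s)) : List.Chain' R (x :: s) := by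
  rcases s with _ | ⟨z, s⟩
  · simp
  · rw [List.chain'_cons, List.chain'_cons, List.chain'_cons] at h
    rw [List.chain'_cons]
    exact ⟨h.2.2.1, h.2.2.2⟩

lemma chain'_mid2 {R : V → V → Prop} {x : V} {s : List V}
    (h : List.Chain' R (x :: x :: s)) : List.Chain' R (x :: s) := by
  rw [List.chain'_cons] at h
  exact h.2

lemma RStep.chain' {R : V → V → Prop} {l l' : List V} (h : RStep l l')
    (hc : l.Chain' R) : l'.Chain' R := by
  rcases h with ⟨p, s, x, y, rfl, rfl⟩ | ⟨p, s, x, rfl, rfl⟩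
  · rw [List.append_assoc, List.chain'_append] at hc
    rw [List.append_assoc, List.chain'_append]
    obtain ⟨h1, h2, h3⟩ := hc
    refine ⟨h1, chain'_mid3 h2, fun a ha b hb => h3 a ha b ?_⟩
    rcases s with _ | ⟨c, s⟩ <;> simp_all
  · rw [List.append_assoc, List.chain'_append] at hc
    rw [List.append_assoc, List.chain'_append]
    obtain ⟨h1, h2, h3⟩ := hc
    refine ⟨h1, chain'_mid2 h2, fun a ha b hb => h3 a ha b ?_⟩
    rcases s with _ | ⟨c, s⟩ <;> simp_all

lemma pe_of_rtg {l l' : List V} (h : Relation.ReflTransGen RStep l l') : PiEq l l' := by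
  induction h with
  | refl => exact pe_refl _
  | tail _ hstep ih => exact ih.trans (Relation.EqvGen.rel _ _ hstep)

lemma rtg_cons {l l' : List V} (h : Relation.ReflTransGen RStep l l') (x : V) :
    Relation.ReflTransGen RStep (x :: l) (x :: l') := by
  induction h with
  | refl => exact Relation.ReflTransGen.refl
  | tail _ hstep ih => exact ih.tail (hstep.cons x)

lemma rtg_rstep1 (x : V) (r : List V) :
    Relation.ReflTransGen RStep (x :: r) (rstep1 x r) := by
  match r with
  | [] => exact Relation.ReflTransGen.refl
  | y :: ys =>
    by_cases hxy : x = y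
    · subst hxy
      simp only [rstep1, if_pos rfl]
      exact Relation.ReflTransGen.single (rstep_xx [] ys x)
    · by_cases hh : ys.head? = some x
      · match ys, hh with
        | z :: zs, hh =>
          have hz : z = x := by simpa using hh
          simp only [rstep1, if_neg hxy, if_pos hh, hz]
          exact Relation.ReflTransGen.single (rstep_xyx [] zs x y)
      · simp only [rstep1, if_neg hxy, if_neg hh]
        exact Relation.ReflTransGen.refl

lemma rtg_nf (l : List V) : Relation.ReflTransGen RStep l (nf l) := by
  induction l with
  | nil => exact Relation.ReflTransGen.refl
  | cons x l ih => exact (rtg_cons ih x).trans (rtg_rstep1 x (nf l))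

lemma pe_nf (l : List V) : PiEq l (nf l) := pe_of_rtg (rtg_nf l)

/-- no pattern at the very front -/
lemma IsReduced.front2 {a b : V} {t : List V} (h : IsReduced (a :: b :: t)) : a ≠ b := by
  intro hab; subst hab
  exact h (a :: t) (rstep_xx [] t a)

lemma IsReduced.front3 {a b c : V} {t : List V} (h : IsReduced (a :: b :: c :: t)) : a ≠ c := by
  intro hac; subst hac
  exact h (a :: t) (rstep_xyx [] t a b)

lemma IsReduced.tail {a : V} {t : List V} (h : IsReduced (a :: t)) : IsReduced t := by
  intro l' hl'
  exact h (a :: l') (hl'.cons a)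

lemma isReduced_nil : IsReduced ([] : List V) := by
  rintro l' (⟨p, s, x, y, h, -⟩ | ⟨p, s, x, h, -⟩) <;> simp at h

lemma isReduced_singleton (x : V) : IsReduced [x] := by
  rintro l' (⟨p, s, z, y, h, -⟩ | ⟨p, s, z, h, -⟩) <;>
  · apply_fun List.length at h
    simp at h
    omega

lemma isReduced_cons {x : V} {r : List V} (hr : IsReduced r)
    (h1 : r.head? ≠ some x) (h2 : r.tail.head? ≠ some x) : IsReduced (x :: r) := by
  rintro l' (⟨p, s, z, y, h, -⟩ | ⟨p, s, z, h, -⟩)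
  · rcases p with _ | ⟨a, p⟩
    · simp only [List.nil_append, List.cons_append, List.cons.injEq] at h
      exact h2 (by rw [h.2]; simp [h.1])
    · simp only [List.cons_append, List.cons.injEq] at h
      exact hr _ (h.2 ▸ rstep_xyx p s z y)
  · rcases p with _ | ⟨a, p⟩
    · simp only [List.nil_append, List.cons_append, List.cons.injEq] at h
      exact h1 (by rw [h.2]; simp [h.1])
    · simp only [List.cons_append, List.cons.injEq] at h
      exact hr _ (h.2 ▸ rstep_xx p s z)

lemma isReduced_pair {x y : V} (h : x ≠ y) : IsReduced [x, y] :=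
  isReduced_cons (isReduced_singleton y) (by simpa using Ne.symm h) (by simp)

lemma isReduced_rstep1 {r : List V} (x : V) (hr : IsReduced r) : IsReduced (rstep1 x r) := by
  match r with
  | [] => exact isReduced_singleton x
  | y :: ys =>
    simp only [rstep1]
    by_cases hxy : x = y
    · rw [if_pos hxy]; exact hr
    · rw [if_neg hxy]
      by_cases hh : ys.head? = some x
      · rw [if_pos hh]; exact hr.tail
      · rw [if_neg hh]
        exact isReduced_cons hr (by simpa using Ne.symm hxy) (by simpa using hh)

lemma isReduced_nf (l : List V) : IsReduced (nf l) := by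
  induction l with
  | nil => exact isReduced_nil
  | cons x l ih => exact isReduced_rstep1 x ih


lemma rstep1_nil (x : V) : rstep1 x ([] : List V) = [x] := rfl

lemma rstep1_cons_eq (x : V) (ys : List V) : rstep1 x (x :: ys) = x :: ys := by
  simp [rstep1]

lemma rstep1_cancel {x y : V} {ys : List V} (hxy : x ≠ y) (h : ys.head? = some x) :
    rstep1 x (y :: ys) = ys := by
  simp [rstep1, hxy, h]

lemma rstep1_ext {x y : V} {ys : List V} (hxy : x ≠ y) (h : ys.head? ≠ some x) :
    rstep1 x (y :: ys) = x :: y :: ys := by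
  simp [rstep1, hxy, h]

lemma red_head3 {a b : V} {t : List V} (h : IsReduced (a :: b :: t)) : t.head? ≠ some a := by
  cases t
  · simp
  · simpa using Ne.symm h.front3

lemma k2 (x : V) (r : List V) : rstep1 x (rstep1 x r) = rstep1 x r := by
  match r with
  | [] => simp [rstep1]
  | y :: ys =>
    by_cases hxy : x = y
    · subst hxy; rw [rstep1_cons_eq, rstep1_cons_eq]
    · by_cases hh : ys.head? = some x
      · rw [rstep1_cancel hxy hh]
        match ys, hh with
        | z :: zs, hh =>
          have hz : z = x := by simpa using hh
          subst hz
          rw [rstep1_cons_eq]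
      · rw [rstep1_ext hxy hh, rstep1_cons_eq]

lemma k1 {r : List V} (hr : IsReduced r) (x y : V) :
    rstep1 x (rstep1 y (rstep1 x r)) = rstep1 x r := by
  match r with
  | [] =>
    rw [rstep1_nil]
    by_cases hyx : y = x
    · subst hyx; rw [rstep1_cons_eq, rstep1_cons_eq]
    · rw [rstep1_ext hyx (by simp), rstep1_cancel (Ne.symm hyx) (by simp)]
  | z :: zs =>
    by_cases hxz : x = z
    · subst hxz
      rw [rstep1_cons_eq]
      by_cases hyx : y = x
      · subst hyx; rw [rstep1_cons_eq, rstep1_cons_eq]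
      · by_cases h2 : zs.head? = some y
        · rw [rstep1_cancel hyx h2]
          match zs, h2 with
          | w :: ws, h2 =>
            have hw : w = y := by simpa using h2
            subst hw
            rw [rstep1_ext (Ne.symm hyx) (red_head3 hr)]
        · rw [rstep1_ext hyx h2, rstep1_cancel (Ne.symm hyx) (by simp)]
    · by_cases hzs : zs.head? = some x
      · rw [rstep1_cancel hxz hzs]
        match zs, hzs with
        | w :: ws, hzs =>
          have hw : x = w := by
            have h' : w = x := by simpa using hzs
            exact h'.symm
          subst hw
          by_cases hyx : y = x
          · subst hyx; rw [rstep1_cons_eq, rstep1_cons_eq]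
          · by_cases h2 : ws.head? = some y
            · rw [rstep1_cancel hyx h2]
              match ws, h2 with
              | t :: ts, h2 =>
                have ht : t = y := by simpa using h2
                subst ht
                rw [rstep1_ext (Ne.symm hyx) (red_head3 hr.tail)]
            · rw [rstep1_ext hyx h2, rstep1_cancel (Ne.symm hyx) (by simp)]
      · rw [rstep1_ext hxz hzs]
        by_cases hyx : y = x
        · subst hyx; rw [rstep1_cons_eq, rstep1_cons_eq]
        · by_cases h2 : z = y
          · subst h2
            rw [rstep1_cancel hyx (by simp), rstep1_ext hxz hzs]
          · rw [rstep1_ext hyx (by simpa using h2),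
              rstep1_cancel (Ne.symm hyx) (by simp)]

lemma nf_cons (x : V) (l : List V) : nf (x :: l) = rstep1 x (nf l) := rfl

lemma nf_eq_aux3 (x y : V) (s : List V) : nf (x :: y :: x :: s) = nf (x :: s) := by
  rw [nf_cons, nf_cons, nf_cons]
  exact k1 (isReduced_nf s) x y

lemma nf_eq_aux2 (x : V) (s : List V) : nf (x :: x :: s) = nf (x :: s) := by
  rw [nf_cons, nf_cons]
  exact k2 x (nf s)

lemma nf_rstep {l l' : List V} (h : RStep l l') : nf l = nf l' := by
  rcases h with ⟨p, s, x, y, rfl, rfl⟩ | ⟨p, s, x, rfl, rfl⟩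
  · induction p with
    | nil => simpa using nf_eq_aux3 x y s
    | cons a p ih =>
      simp only [List.cons_append, nf_cons] at ih ⊢
      rw [ih]
  · induction p with
    | nil => simpa using nf_eq_aux2 x s
    | cons a p ih =>
      simp only [List.cons_append, nf_cons] at ih ⊢
      rw [ih]

lemma nf_piEq {l l' : List V} (h : PiEq l l') : nf l = nf l' := by
  induction h with
  | rel a b hab => exact nf_rstep hab
  | refl a => rfl
  | symm a b _ ih => exact ih.symm
  | trans a b c _ _ ih₁ ih₂ => exact ih₁.trans ih₂

lemma nf_of_isReduced {l : List V} (h : IsReduced l) : nf l = l := by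
  rcases (rtg_nf l).cases_head with h' | ⟨c, hc, -⟩
  · exact h'.symm
  · exact absurd hc (h c)

lemma piEq_unique {l l' : List V} (h : PiEq l l') (h1 : IsReduced l) (h2 : IsReduced l') :
    l = l' := by
  rw [← nf_of_isReduced h1, ← nf_of_isReduced h2, nf_piEq h]

lemma piEq_iff_nf {l l' : List V} : PiEq l l' ↔ nf l = nf l' :=
  ⟨nf_piEq, fun h => (pe_nf l).trans (h ▸ (pe_nf l').symm)⟩

lemma chain'_of_rtg {R : V → V → Prop} {l l' : List V}
    (h : Relation.ReflTransGen RStep l l') (hc : l.Chain' R) : l'.Chain' R := by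
  induction h with
  | refl => exact hc
  | tail _ hstep ih => exact hstep.chain' ih

lemma nf_chain' {R : V → V → Prop} {l : List V} (hc : l.Chain' R) : (nf l).Chain' R :=
  chain'_of_rtg (rtg_nf l) hc

lemma nf_head? (l : List V) : (nf l).head? = l.head? := ((pe_nf l).head?).symm

lemma nf_getLast? (l : List V) : (nf l).getLast? = l.getLast? := ((pe_nf l).getLast?).symm

lemma PiEq.ne_nil {l l' : List V} (h : PiEq l l') (hl : l ≠ []) : l' ≠ [] := by
  intro h'
  have hh := h.head?
  rw [h'] at hh
  cases l <;> simp_all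



lemma exists_concat_of_getLast? {l : List V} {x : V} (h : l.getLast? = some x) :
    ∃ l', l = l' ++ [x] := by
  rcases l.eq_nil_or_concat with rfl | ⟨l', z, rfl⟩
  · simp at h
  · have h2 : z = x := by simpa using h
    exact ⟨l', by simp [h2]⟩

lemma exists_cons_of_head? {l : List V} {a : V} (h : l.head? = some a) :
    ∃ t, l = a :: t := by
  cases l with
  | nil => simp at h
  | cons x t => exact ⟨t, by simpa using h⟩

lemma head?_append_left {l t : List V} (h : l ≠ []) : (l ++ t).head? = l.head? := by
  cases l <;> simp_all

lemma tail_append_left {l t : List V} (h : l ≠ []) : (l ++ t).tail = l.tail ++ t := by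
  cases l <;> simp_all

lemma pe_rev_self : ∀ (l : List V) (a : V), l.getLast? = some a →
    PiEq (l.reverse ++ l.tail) [a]
  | [], a, h => by simp at h
  | [x], a, h => by
    obtain rfl : x = a := by simpa using h
    simpa using pe_refl [x]
  | x :: y :: t, a, h => by
    have h' : (y :: t).getLast? = some a := by rwa [List.getLast?_cons_cons] at h
    have step : PiEq ((x :: y :: t).reverse ++ (x :: y :: t).tail)
        ((y :: t).reverse ++ (y :: t).tail) := by
      have := pe_xyx t.reverse t y x
      simpa using this
    exact step.trans (pe_rev_self (y :: t) a h')

lemma pe_self_rev (l : List V) (a : V) (h : l.head? = some a) :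
    PiEq (l ++ l.reverse.tail) [a] := by
  have := pe_rev_self l.reverse a (by simpa using h)
  simpa using this

lemma RStep.rev {l l' : List V} (h : RStep l l') : RStep l.reverse l'.reverse := by
  rcases h with ⟨p, s, x, y, rfl, rfl⟩ | ⟨p, s, x, rfl, rfl⟩
  · exact Or.inl ⟨s.reverse, p.reverse, x, y, by simp, by simp⟩
  · exact Or.inr ⟨s.reverse, p.reverse, x, by simp, by simp⟩

lemma PiEq.rev {l l' : List V} (h : PiEq l l') : PiEq l.reverse l'.reverse := by
  induction h with
  | rel a b hab => exact Relation.EqvGen.rel _ _ hab.rev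
  | refl a => exact pe_refl _
  | symm a b _ ih => exact ih.symm
  | trans a b c _ _ ih₁ ih₂ => exact ih₁.trans ih₂

lemma rstep_glue_right {Xp M M' : List V} (h : RStep M M') (hb : Xp.getLast? = M.head?) :
    PiEq (Xp ++ M.tail) (Xp ++ M'.tail) := by
  rcases h with ⟨p, s, x, y, rfl, rfl⟩ | ⟨p, s, x, rfl, rfl⟩
  · rcases p with _ | ⟨a, p⟩
    · have hx : Xp.getLast? = some x := by simpa using hb
      obtain ⟨Xp', rfl⟩ := exists_concat_of_getLast? hx
      simpa using pe_xyx Xp' s x y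
    · simpa using pe_xyx (Xp ++ p) s x y
  · rcases p with _ | ⟨a, p⟩
    · have hx : Xp.getLast? = some x := by simpa using hb
      obtain ⟨Xp', rfl⟩ := exists_concat_of_getLast? hx
      simpa using pe_xx Xp' s x
    · simpa using pe_xx (Xp ++ p) s x

lemma pe_glue_right {Xp M M' : List V} (h : PiEq M M') (hb : Xp.getLast? = M.head?) :
    PiEq (Xp ++ M.tail) (Xp ++ M'.tail) := by
  revert hb
  induction h with
  | rel a b hab => exact fun hb => rstep_glue_right hab hb
  | refl a => exact fun _ => pe_refl _
  | symm a b hab ih =>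
    intro hb
    exact (ih (hb.trans (PiEq.head? hab).symm)).symm
  | trans a b c hab hbc ih₁ ih₂ =>
    intro hb
    exact (ih₁ hb).trans (ih₂ (hb.trans (PiEq.head? hab)))

lemma pe_cancel_left {Z X Y : List V} {z : V} (hZ : Z.getLast? = some z)
    (h : PiEq (Z ++ X) (Z ++ Y)) : PiEq (z :: X) (z :: Y) := by
  have hZne : Z ≠ [] := by rintro rfl; simp at hZ
  have h1 : PiEq (Z.reverse ++ (Z ++ X).tail) (Z.reverse ++ (Z ++ Y).tail) :=
    pe_glue_right h (by rw [List.getLast?_reverse, head?_append_left hZne])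
  rw [tail_append_left hZne, tail_append_left hZne] at h1
  have h2 : PiEq ((Z.reverse ++ Z.tail) ++ X) ([z] ++ X) := pe_app_right (pe_rev_self Z z hZ) X
  have h3 : PiEq ((Z.reverse ++ Z.tail) ++ Y) ([z] ++ Y) := pe_app_right (pe_rev_self Z z hZ) Y
  rw [List.append_assoc] at h2 h3
  exact (h2.symm.trans (h1.trans h3) : PiEq ([z] ++ X) ([z] ++ Y))

lemma pe_cancel_cons {X Y : List V} {c h : V} (hX : X.head? = some h) (hY : Y.head? = some h)
    (hpe : PiEq (c :: X) (c :: Y)) : PiEq X Y := by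
  obtain ⟨X', rfl⟩ := exists_cons_of_head? hX
  obtain ⟨Y', rfl⟩ := exists_cons_of_head? hY
  have h1 : PiEq (h :: c :: h :: X') (h :: c :: h :: Y') := pe_cons hpe h
  have h2 : PiEq (h :: c :: h :: X') (h :: X') := by simpa using pe_xyx [] X' h c
  have h3 : PiEq (h :: c :: h :: Y') (h :: Y') := by simpa using pe_xyx [] Y' h c
  exact h2.symm.trans (h1.trans h3)

lemma pe_cancel_right {X Y T : List V} {t : V} (hT : T.head? = some t)
    (h : PiEq (X ++ T) (Y ++ T)) : PiEq (X ++ [t]) (Y ++ [t]) := by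
  have h1 := pe_app_right h T.reverse.tail
  rw [List.append_assoc, List.append_assoc] at h1
  have h2 : PiEq (X ++ (T ++ T.reverse.tail)) (X ++ [t]) := pe_app_left (pe_self_rev T t hT) X
  have h3 : PiEq (Y ++ (T ++ T.reverse.tail)) (Y ++ [t]) := pe_app_left (pe_self_rev T t hT) Y
  exact h2.symm.trans (h1.trans h3)

lemma pe_const {a : V} : ∀ {l : List V}, (∀ x ∈ l, x = a) → l ≠ [] → PiEq l [a] := by
  intro l
  induction l with
  | nil => exact fun _ h => absurd rfl h
  | cons x t ih =>
    intro hall _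
    have hx : x = a := hall x (by simp)
    subst hx
    rcases t with _ | ⟨y, t'⟩
    · exact pe_refl _
    · have hy : y = x := hall y (by simp)
      subst hy
      have h1 : PiEq (y :: y :: t') (y :: t') := by simpa using pe_xx [] t' y
      exact h1.trans (ih (fun z hz => hall z (List.mem_cons_of_mem _ hz)) (by simp))


end Aux1

section Walks
variable {V X : Type} {G : Dgraph V} {H : Dgraph X}

lemma UAdj.symm {u v : V} (h : G.UAdj u v) : G.UAdj v u := h.elim Or.inr Or.inl

lemma IsWalk.ne_nil {a b : V} {l : List V} (h : IsWalk G a b l) : l ≠ [] := h.1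
lemma IsWalk.head? {a b : V} {l : List V} (h : IsWalk G a b l) : l.head? = some a := h.2.1
lemma IsWalk.getLast? {a b : V} {l : List V} (h : IsWalk G a b l) : l.getLast? = some b := h.2.2.1
lemma IsWalk.chain' {a b : V} {l : List V} (h : IsWalk G a b l) : l.Chain' G.UAdj := h.2.2.2

lemma isWalk_singleton (G : Dgraph V) (a : V) : IsWalk G a a [a] :=
  ⟨by simp, by simp, by simp, by simp⟩

lemma isWalk_pair {a b : V} (h : G.UAdj a b) : IsWalk G a b [a, b] :=
  ⟨by simp, by simp, by simp, by simp [h]⟩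

lemma getLast?_append_right {l t : List V} (h : t ≠ []) :
    (l ++ t).getLast? = t.getLast? := List.getLast?_append_of_ne_nil l h

lemma IsWalk.wcomp_walk {a b c : V} {l₁ l₂ : List V} (h1 : IsWalk G a b l₁)
    (h2 : IsWalk G b c l₂) : IsWalk G a c (wcomp l₁ l₂) := by
  obtain ⟨t, rfl⟩ := exists_cons_of_head? h2.head?
  have hch := h2.chain'
  rw [List.chain'_cons'] at hch
  refine ⟨by simp [wcomp, h1.ne_nil], ?_, ?_, ?_⟩
  · rw [wcomp, head?_append_left h1.ne_nil]
    exact h1.head?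
  · rcases t with _ | ⟨y, t⟩
    · have : b = c := by simpa using h2.getLast?
      simpa [wcomp, this ▸ h1.getLast?] using (this ▸ h1.getLast?)
    · rw [wcomp, List.tail_cons, getLast?_append_right (by simp)]
      simpa using h2.getLast?
  · rw [wcomp, List.tail_cons, List.chain'_append]
    refine ⟨h1.chain', hch.2, fun x hx y hy => ?_⟩
    have hxb : x = b := by
      have := h1.getLast?
      simp [Option.mem_def, this] at hx
      exact hx.symm
    subst hxb
    exact hch.1 y hy

lemma IsWalk.rev {a b : V} {l : List V} (h : IsWalk G a b l) : IsWalk G b a l.reverse := by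
  refine ⟨by simp [h.ne_nil], by simp [h.getLast?], by simp [h.head?], ?_⟩
  rw [List.chain'_reverse]
  exact h.chain'.imp (fun _ _ hab => hab.symm)

lemma uadj_map {f : V → X} (hf : IsHom G H f) {u v : V} (h : G.UAdj u v) :
    H.UAdj (f u) (f v) := h.elim (fun h' => Or.inl (hf h')) (fun h' => Or.inr (hf h'))

lemma IsWalk.map_walk {f : V → X} (hf : IsHom G H f) {a b : V} {l : List V}
    (h : IsWalk G a b l) : IsWalk H (f a) (f b) (l.map f) := by
  refine ⟨by simp [h.ne_nil], by simp [h.head?], by simp [h.getLast?], ?_⟩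
  exact List.chain'_map_of_chain' f (fun _ _ hab => uadj_map hf hab) h.chain'

lemma IsWalk.snoc {a b w : V} {l : List V} (h : IsWalk G a b l) (hadj : G.UAdj b w) :
    IsWalk G a w (l ++ [w]) := by
  have := h.wcomp_walk (isWalk_pair hadj)
  simpa [wcomp] using this

lemma chain'_and {A : Type} {R S : A → A → Prop} {l : List A}
    (hR : l.Chain' R) (hS : l.Chain' S) : l.Chain' (fun a b => R a b ∧ S a b) := by
  rw [List.chain'_iff_get] at hR hS ⊢
  exact fun i h => ⟨hR i h, hS i h⟩

lemma map_wcomp (f : V → X) (l₁ l₂ : List V) :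
    (wcomp l₁ l₂).map f = wcomp (l₁.map f) (l₂.map f) := by
  simp [wcomp]

end Walks


section Seqs
variable {V X : Type} {G : Dgraph V} {H : Dgraph X}

/-- Combined unique-change + push-or-pull step relation. -/
def PPRel (G : Dgraph V) (σ σ' : V → X) : Prop :=
  (∃! u, σ u ≠ σ' u) ∧ ∀ u, σ u ≠ σ' u → ∀ w, G.UAdj u w → σ w = σ u ∨ σ w = σ' u

lemma pe_dd {V : Type} (a : V) (t : List V) : PiEq (a :: a :: t) (a :: t) := by
  simpa using pe_xx [] t a

lemma pe_dd2 {V : Type} (b a : V) (t : List V) : PiEq (b :: a :: a :: t) (b :: a :: t) := by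
  simpa using pe_xx [b] t a

lemma pe_aba {V : Type} (a b : V) (t : List V) : PiEq (a :: b :: a :: t) (a :: t) := by
  simpa using pe_xyx [] t a b

lemma pe_aba2 {V : Type} (c a b : V) (t : List V) :
    PiEq (c :: a :: b :: a :: t) (c :: a :: t) := by
  simpa using pe_xyx [c] t a b

lemma lemD_key {σ σ' : V → X} (hrel : PPRel G σ σ') {u w : V} (huw : G.UAdj u w)
    (cw : List X) :
    PiEq (σ u :: σ w :: σ' w :: cw) (σ u :: σ' u :: σ' w :: cw) := by
  by_cases hu : σ u = σ' u <;> by_cases hw : σ w = σ' w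
  · rw [← hu, ← hw]
    exact (pe_dd2 (σ u) (σ w) cw).trans (pe_dd (σ u) (σ w :: cw)).symm
  · rw [← hu]
    rcases hrel.2 w hw u huw.symm with hc | hc
    · rw [← hc]
      exact pe_refl _
    · rw [← hc]
      exact (pe_aba (σ u) (σ w) cw).trans ((pe_dd (σ u) (σ u :: cw)).trans
        (pe_dd (σ u) cw)).symm
  · rw [← hw]
    rcases hrel.2 u hu w huw with hc | hc
    · rw [hc]
      exact ((pe_dd (σ u) (σ u :: cw)).trans (pe_dd (σ u) cw)).trans
        (pe_aba (σ u) (σ' u) cw).symm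
    · rw [hc]
      exact pe_refl _
  · obtain ⟨z, hz, hzu⟩ := hrel.1
    obtain rfl : u = w := (hzu u hu).trans (hzu w hw).symm
    exact (pe_dd (σ u) (σ' u :: cw)).trans (pe_dd2 (σ u) (σ' u) cw).symm

lemma colorWalk_cons (σ : V → X) (σs : List (V → X)) (v : V) :
    colorWalk (σ :: σs) v = σ v :: colorWalk σs v := rfl

lemma colorWalk_head? {σs : List (V → X)} {σ₀ : V → X} (h : σs.head? = some σ₀) (v : V) :
    (colorWalk σs v).head? = some (σ₀ v) := by
  simp [colorWalk, h]

lemma colorWalk_getLast? {σs : List (V → X)} {σL : V → X} (h : σs.getLast? = some σL) (v : V) :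
    (colorWalk σs v).getLast? = some (σL v) := by
  simp [colorWalk, h]

lemma colorWalk_ne_nil {σs : List (V → X)} (h : σs ≠ []) (v : V) :
    colorWalk σs v ≠ [] := by
  simp [colorWalk, h]

lemma lemD : ∀ (σs : List (V → X)) (σ₀ σL : V → X), σs.Chain' (PPRel G) →
    σs.head? = some σ₀ → σs.getLast? = some σL → ∀ u w, G.UAdj u w →
    PiEq (σ₀ u :: colorWalk σs w) (colorWalk σs u ++ [σL w])
  | [], _, _, _, h0, _, _, _, _ => by simp at h0
  | [σ], σ₀, σL, _, h0, hL, u, w, _ => by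
    obtain rfl : σ = σ₀ := by simpa using h0
    obtain rfl : σ = σL := by simpa using hL
    exact pe_refl _
  | σ :: σ' :: rest, σ₀, σL, hch, h0, hL, u, w, huw => by
    obtain rfl : σ = σ₀ := by simpa using h0
    have hrel : PPRel G σ σ' := (List.chain'_cons.mp hch).1
    have hch' := (List.chain'_cons.mp hch).2
    have hL' : (σ' :: rest).getLast? = some σL := by rwa [List.getLast?_cons_cons] at hL
    have IH := lemD (σ' :: rest) σ' σL hch' (by simp) hL' u w huw
    have key := lemD_key hrel huw (colorWalk rest w)
    rw [colorWalk_cons, colorWalk_cons, colorWalk_cons]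
    exact (key.trans (pe_cons IH (σ u)) : _)

lemma IsWalk.uncons {a b x y : V} {t : List V} (h : IsWalk G a b (x :: y :: t)) :
    x = a ∧ G.UAdj a y ∧ IsWalk G y b (y :: t) := by
  have hx : x = a := by simpa using h.head?
  subst hx
  have hch := h.chain'
  rw [List.chain'_cons] at hch
  refine ⟨rfl, hch.1, ⟨by simp, by simp, ?_, hch.2⟩⟩
  rw [← List.getLast?_cons_cons (a := x)]
  exact h.getLast?

lemma lemE {σs : List (V → X)} {σ₀ σL : V → X} (hch : σs.Chain' (PPRel G))
    (h0 : σs.head? = some σ₀) (hL : σs.getLast? = some σL) :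
    ∀ (Wl : List V) (u v : V), IsWalk G u v Wl →
    PiEq (Wl.map σ₀ ++ (colorWalk σs v).tail) (colorWalk σs u ++ (Wl.map σL).tail)
  | [], u, v, hw => absurd rfl hw.ne_nil
  | [x], u, v, hw => by
    have hx1 : x = u := by simpa using hw.head?
    subst hx1
    have hx2 : x = v := by simpa using hw.getLast?
    subst hx2
    obtain ⟨T, hT⟩ := exists_cons_of_head? (colorWalk_head? h0 x)
    rw [hT]
    simp only [List.map_cons, List.map_nil, List.tail_cons, List.append_nil,
      List.singleton_append]
    exact pe_refl _
  | x :: y :: t, u, v, hw => by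
    obtain ⟨rfl, hadj, hw'⟩ := hw.uncons
    have IH := lemE hch h0 hL (y :: t) y v hw'
    have step1 := pe_cons IH (σ₀ x)
    have step2 := pe_app_right (lemD σs σ₀ σL hch h0 hL x y hadj) (List.map σL t)
    rw [List.append_assoc] at step2
    simp only [List.map_cons, List.cons_append, List.tail_cons] at *
    exact step1.trans step2

lemma get_congr {l : List V} {i j : ℕ} (hij : i = j) (hi : i < l.length) :
    l.get ⟨i, hi⟩ = l.get ⟨j, hij ▸ hi⟩ := by subst hij; rfl

lemma IsReduced.get_ne_succ {l : List V} (h : IsReduced l) {i : ℕ} (hi : i + 1 < l.length) :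
    l.get ⟨i, by omega⟩ ≠ l.get ⟨i + 1, hi⟩ := by
  intro heq
  have hd : l.drop i = l.get ⟨i, by omega⟩ :: l.get ⟨i + 1, hi⟩ :: l.drop (i + 2) := by
    rw [List.drop_eq_getElem_cons (by omega), List.drop_eq_getElem_cons (by omega)]
    simp [List.get_eq_getElem]
  have hsplit : l = l.take i ++ [l.get ⟨i, by omega⟩, l.get ⟨i + 1, hi⟩] ++ l.drop (i + 2) := by
    conv_lhs => rw [← List.take_append_drop i l, hd]
    simp
  exact h _ (Or.inr ⟨l.take i, l.drop (i + 2), _, by rw [← heq] at hsplit; exact hsplit, rfl⟩)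

lemma IsReduced.get_ne_succ_succ {l : List V} (h : IsReduced l) {i : ℕ}
    (hi : i + 2 < l.length) : l.get ⟨i, by omega⟩ ≠ l.get ⟨i + 2, hi⟩ := by
  intro heq
  have hd : l.drop i = l.get ⟨i, by omega⟩ :: l.get ⟨i + 1, by omega⟩ ::
      l.get ⟨i + 2, hi⟩ :: l.drop (i + 3) := by
    rw [List.drop_eq_getElem_cons (by omega), List.drop_eq_getElem_cons (by omega),
      List.drop_eq_getElem_cons (by omega)]
    simp [List.get_eq_getElem]
  have hsplit : l = l.take i ++ [l.get ⟨i, by omega⟩, l.get ⟨i + 1, by omega⟩,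
      l.get ⟨i + 2, hi⟩] ++ l.drop (i + 3) := by
    conv_lhs => rw [← List.take_append_drop i l, hd]
    simp
  exact h _ (Or.inl ⟨l.take i, l.drop (i + 3), _, _, by rw [← heq] at hsplit; exact hsplit, rfl⟩)

lemma get_zero_of_head? {l : List V} {a : V} (h : l.head? = some a) (hl : 0 < l.length) :
    l.get ⟨0, hl⟩ = a := by
  obtain ⟨t, rfl⟩ := exists_cons_of_head? h
  rfl

lemma get_last_of_getLast? {l : List V} {b : V} (h : l.getLast? = some b)
    (hl : l.length - 1 < l.length) : l.get ⟨l.length - 1, hl⟩ = b := by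
  have hne : l ≠ [] := by rintro rfl; simp at h
  rw [← List.getLast_eq_get l hne]
  rw [List.getLast?_eq_getLast hne] at h
  simpa using h

lemma chain'_get_uadj {C : List V} (h : C.Chain' G.UAdj) {i : ℕ} (hi : i + 1 < C.length) :
    G.UAdj (C.get ⟨i, by omega⟩) (C.get ⟨i + 1, hi⟩) :=
  List.chain'_iff_get.mp h i (by omega)

lemma lemA_step {σ σ' : V → X}
    (hrel : ∀ u, σ u ≠ σ' u → ∀ w, G.UAdj u w → σ w = σ u ∨ σ w = σ' u)
    {v₀ : V} {C : List V} (hC : IsWalk G v₀ v₀ C) (htight : IsCycReduced (C.map σ)) :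
    ∀ x ∈ C, σ' x = σ x := by
  intro x hx
  by_contra hne
  obtain ⟨⟨i, hilt⟩, rfl⟩ := List.mem_iff_get.mp hx
  set n := C.length with hn
  obtain ⟨hred, h2len, hcyc⟩ := htight
  have h2n : 2 ≤ n := by simpa using h2len
  have hgetM : ∀ (j : ℕ) (hj : j < n), (C.map σ).get ⟨j, by simpa using hj⟩
      = σ (C.get ⟨j, hj⟩) := fun j hj => List.get_map σ
  have hmemne : σ (C.get ⟨i, hilt⟩) ≠ σ' (C.get ⟨i, hilt⟩) := fun hh => hne hh.symm
  by_cases hint : 0 < i ∧ i + 1 < n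
  · -- interior vertex
    obtain ⟨hi0, hi1⟩ := hint
    have hadj1 : G.UAdj (C.get ⟨i, hilt⟩) (C.get ⟨i - 1, by omega⟩) := by
      have := chain'_get_uadj hC.chain' (i := i - 1) (by omega)
      have hii : i - 1 + 1 = i := by omega
      exact (by simpa [hii] using this : G.UAdj (C.get ⟨i - 1, by omega⟩) _).symm
    have hadj2 : G.UAdj (C.get ⟨i, hilt⟩) (C.get ⟨i + 1, hi1⟩) :=
      chain'_get_uadj hC.chain' hi1
    have hne1 : σ (C.get ⟨i - 1, by omega⟩) ≠ σ (C.get ⟨i, hilt⟩) := by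
      have := hred.get_ne_succ (i := i - 1) (by simpa using (by omega : i - 1 + 1 < n))
      rw [hgetM (i - 1) (by omega)] at this
      have hii : i - 1 + 1 = i := by omega
      simpa [hii, hgetM] using this
    have hne2 : σ (C.get ⟨i + 1, hi1⟩) ≠ σ (C.get ⟨i, hilt⟩) := by
      have := hred.get_ne_succ (i := i) (by simpa using hi1)
      rw [hgetM i (by omega), hgetM (i + 1) hi1] at this
      exact this.symm
    have hskip : σ (C.get ⟨i - 1, by omega⟩) ≠ σ (C.get ⟨i + 1, hi1⟩) := by
      have := hred.get_ne_succ_succ (i := i - 1) (by simpa using (by omega : i - 1 + 2 < n))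
      have hii : i - 1 + 2 = i + 1 := by omega
      rw [hgetM (i - 1) (by omega)] at this
      simpa [hii, hgetM] using this
    rcases hrel _ hmemne _ hadj1 with hc1 | hc1
    · exact hne1 hc1
    · rcases hrel _ hmemne _ hadj2 with hc2 | hc2
      · exact hne2 hc2
      · exact hskip (hc1.trans hc2.symm)
  · -- boundary vertex: C.get i = v₀
    have hxv : C.get ⟨i, hilt⟩ = v₀ := by
      rcases (by omega : i = 0 ∨ i = n - 1) with rfl | hieq
      · exact get_zero_of_head? hC.head? _
      · rw [get_congr hieq hilt]
        exact get_last_of_getLast? hC.getLast? (by omega)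
    rw [hxv] at hmemne
    have hadj1 : G.UAdj v₀ (C.get ⟨1, by omega⟩) := by
      have := chain'_get_uadj hC.chain' (i := 0) (by omega)
      rwa [get_zero_of_head? hC.head? (by omega)] at this
    have hadj2 : G.UAdj v₀ (C.get ⟨n - 2, by omega⟩) := by
      have := chain'_get_uadj hC.chain' (i := n - 2) (by omega : n - 2 + 1 < n)
      have hii : n - 2 + 1 = n - 1 := by omega
      have h2 : C.get ⟨n - 2 + 1, by omega⟩ = v₀ := by
        rw [get_congr (by omega : n - 2 + 1 = n - 1)]
        exact get_last_of_getLast? hC.getLast? (by omega)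
      rw [h2] at this
      exact this.symm
    have hne1 : σ (C.get ⟨1, by omega⟩) ≠ σ v₀ := by
      have := hred.get_ne_succ (i := 0) (by simpa using (by omega : 0 + 1 < n))
      rw [hgetM 0 (by omega), hgetM 1 (by omega)] at this
      rw [get_zero_of_head? hC.head? (by omega)] at this
      simpa using this.symm
    have hne2 : σ (C.get ⟨n - 2, by omega⟩) ≠ σ v₀ := by
      have := hred.get_ne_succ (i := n - 2) (by simpa using (by omega : n - 2 + 1 < n))
      rw [hgetM (n - 2) (by omega)] at this
      have h2 : (C.map σ).get ⟨n - 2 + 1, by simp; omega⟩ = σ v₀ := by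
        rw [hgetM (n - 2 + 1) (by omega),
          get_congr (by omega : n - 2 + 1 = n - 1),
          get_last_of_getLast? hC.getLast? (by omega)]
      rw [h2] at this
      exact this
    have hskip : σ (C.get ⟨1, by omega⟩) ≠ σ (C.get ⟨n - 2, by omega⟩) := by
      intro heq
      apply hcyc
      rw [hgetM 1 (by omega),
        get_congr (by simp [hn] : (C.map σ).length - 2 = n - 2),
        hgetM (n - 2) (by omega)]
      exact heq
    rcases hrel _ hmemne _ hadj1 with hc1 | hc1
    · exact hne1 hc1
    · rcases hrel _ hmemne _ hadj2 with hc2 | hc2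
      · exact hne2 hc2
      · exact hskip (hc1.trans hc2.symm)

lemma lemA : ∀ {σs : List (V → X)}, PushOrPull G σs → ∀ {σ₀ : V → X},
    σs.head? = some σ₀ → ∀ {v₀ : V} {C : List V}, IsWalk G v₀ v₀ C →
    IsCycReduced (C.map σ₀) → ∀ σ ∈ σs, ∀ x ∈ C, σ x = σ₀ x := by
  intro σs
  induction σs with
  | nil => intro _ _ h0; simp at h0
  | cons σ rest ih =>
    intro hpp σ₀ h0 v₀ C hC htight τ hτ x hx
    obtain rfl : σ = σ₀ := by simpa using h0
    rcases List.mem_cons.mp hτ with rfl | hτ'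
    · rfl
    · rcases rest with _ | ⟨σ', rest'⟩
      · simp at hτ'
      · have hrel := (List.chain'_cons.mp hpp).1
        have hpp' : PushOrPull G (σ' :: rest') := (List.chain'_cons.mp hpp).2
        have hstep := lemA_step hrel hC htight
        have htight' : IsCycReduced (C.map σ') := by
          rwa [List.map_congr_left (fun a ha => hstep a ha)]
        have := ih hpp' (by simp) hC htight' τ hτ' x hx
        rw [this, hstep x hx]

variable {α β : V → X} {q : V} {Q : List X}

lemma forward_chain {σs : List (V → X)} (hA : AdjRecolSeq G H σs) (hpp : PushOrPull G σs) :
    σs.Chain' (PPRel G) :=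
  (chain'_and (hA.2.2.imp (fun _ _ hc => hc.1)) hpp).imp (fun _ _ hc => ⟨hc.1, hc.2⟩)

lemma forward_topvalid {σs : List (V → X)} (hA : AdjRecolSeq G H σs)
    (hpp : PushOrPull G σs) (h0 : σs.head? = some α) (hL : σs.getLast? = some β)
    (hα : IsHom G H α) (hβ : IsHom G H β)
    (hQ : IsWalk H (α q) (β q) Q) (hpe : PiEq (colorWalk σs q) Q) :
    TopValid G H α β q Q := by
  intro C hCwalk
  have hchain := forward_chain hA hpp
  have hE := lemE hchain h0 hL C q q hCwalk
  set Sq := colorWalk σs q with hSq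
  set αC := C.map α with hαC
  set βC := C.map β with hβC
  have hαCw : IsWalk H (α q) (α q) αC := hCwalk.map_walk hα
  have hβCw : IsWalk H (β q) (β q) βC := hCwalk.map_walk hβ
  have hSqh : Sq.head? = some (α q) := colorWalk_head? h0 q
  have hSqne : Sq ≠ [] := colorWalk_ne_nil hA.1 q
  have hQne : Q ≠ [] := hQ.ne_nil
  obtain ⟨T, hT⟩ := exists_cons_of_head? hβCw.head?
  have h1 : PiEq ((Q.reverse ++ Q.tail) ++ βC.tail) ([β q] ++ βC.tail) :=
    pe_app_right (pe_rev_self Q (β q) hQ.getLast?) _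
  have h2 : PiEq (Q ++ βC.tail) (Sq ++ βC.tail) := pe_app_right hpe.symm _
  have h3 : PiEq (αC ++ Sq.tail) (αC ++ Q.tail) :=
    pe_glue_right hpe (by rw [hαCw.getLast?, hSqh])
  have hQβ : PiEq (Q ++ βC.tail) (αC ++ Q.tail) := h2.trans (hE.symm.trans h3)
  have h4 : PiEq (Q.reverse ++ (Q ++ βC.tail).tail) (Q.reverse ++ (αC ++ Q.tail).tail) :=
    pe_glue_right hQβ (by rw [List.getLast?_reverse, head?_append_left hQne])
  rw [tail_append_left hQne, tail_append_left hαCw.ne_nil] at h4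
  show PiEq βC (wcomp (wcomp Q.reverse αC) Q)
  have hfin0 : PiEq ([β q] ++ βC.tail) (Q.reverse ++ (Q.tail ++ βC.tail)) := by
    have h1' := h1.symm
    rw [List.append_assoc] at h1'
    exact h1'
  have hcomb := hfin0.trans h4
  rw [← List.append_assoc] at hcomb
  have hβCeq : βC = [β q] ++ βC.tail := by rw [hT]; rfl
  rw [hβCeq]
  exact hcomb

lemma forward_cond2 {σs : List (V → X)} (hA : AdjRecolSeq G H σs)
    (hpp : PushOrPull G σs) (h0 : σs.head? = some α) (hL : σs.getLast? = some β)
    (hα : IsHom G H α) (hβ : IsHom G H β)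
    (hQ : IsWalk H (α q) (β q) Q) (hpe : PiEq (colorWalk σs q) Q) :
    ∀ (v₀ : V) (C : List V), IsWalk G v₀ v₀ C → IsCycReduced (C.map α) →
      ∀ v ∈ C, ∀ Wl : List V, IsWalk G v q Wl →
        PiEq Q (wcomp (Wl.map α).reverse (Wl.map β)) := by
  intro v₀ C hC htight v hv Wl hW
  have hchain := forward_chain hA hpp
  have hfreeze := lemA hpp h0 hC htight
  set Sq := colorWalk σs q with hSqdef
  set Sv := colorWalk σs v with hSvdef
  set A := Wl.map α with hA'
  set B := Wl.map β with hB'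
  have hAw : IsWalk H (α v) (α q) A := hW.map_walk hα
  have hSvh : Sv.head? = some (α v) := colorWalk_head? h0 v
  have hSvne : Sv ≠ [] := colorWalk_ne_nil hA.1 v
  have hSqh : Sq.head? = some (α q) := colorWalk_head? h0 q
  have hSvconst : PiEq Sv [α v] := by
    refine pe_const (fun y hy => ?_) hSvne
    rw [hSvdef] at hy
    obtain ⟨σ, hσ, rfl⟩ := List.mem_map.mp hy
    exact hfreeze σ hσ v hv
  have hE := lemE hchain h0 hL Wl v q hW
  -- hE : PiEq (A ++ Sq.tail) (Sv ++ B.tail)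
  have step1 : PiEq Q Sq := hpe.symm
  obtain ⟨Tq, hTq⟩ := exists_cons_of_head? hSqh
  have hSqeq : Sq = [α q] ++ Sq.tail := by rw [hTq]; rfl
  have step2 : PiEq ([α q] ++ Sq.tail) ((A.reverse ++ A.tail) ++ Sq.tail) :=
    pe_app_right (pe_rev_self A (α q) hAw.getLast?).symm _
  have step3 : PiEq (A.reverse ++ (A ++ Sq.tail).tail) (A.reverse ++ (Sv ++ B.tail).tail) :=
    pe_glue_right hE (by rw [List.getLast?_reverse, head?_append_left hAw.ne_nil])
  rw [tail_append_left hAw.ne_nil, tail_append_left hSvne] at step3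
  have step4 : PiEq (A.reverse ++ Sv.tail) (A.reverse ++ ([α v] : List X).tail) :=
    pe_glue_right hSvconst (by rw [List.getLast?_reverse, hAw.head?, hSvh])
  have step4' := pe_app_right step4 B.tail
  simp only [List.append_assoc, List.tail_cons, List.append_nil, List.nil_append] at step4'
  rw [hSqeq] at step1
  have c1 := step1.trans step2
  rw [List.append_assoc] at c1
  have c2 := c1.trans step3
  exact c2.trans step4'


lemma wcomp_def {V : Type} (l₁ l₂ : List V) : wcomp l₁ l₂ = l₁ ++ l₂.tail := rfl

lemma getLast?_append_tail {V : Type} {l M : List V} (h : l.getLast? = M.head?) :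
    (l ++ M.tail).getLast? = M.getLast? := by
  cases M with
  | nil =>
    have : l = [] := by
      rcases l.eq_nil_or_concat with rfl | ⟨l', z, rfl⟩
      · rfl
      · simp at h
    simp [this]
  | cons m T =>
    cases T with
    | nil => simpa using h
    | cons t T' =>
      rw [List.tail_cons, getLast?_append_right (by simp), List.getLast?_cons_cons]

lemma conj_indep (htv : TopValid G H α β q Q) (hQ : IsWalk H (α q) (β q) Q)
    (hα : IsHom G H α) (hβ : IsHom G H β) {v : V} {W₁ W₂ : List V}
    (h1 : IsWalk G q v W₁) (h2 : IsWalk G q v W₂) :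
    PiEq (conj α β W₁ Q) (conj α β W₂ Q) := by
  set A1 := W₁.map α with hA1def
  set A2 := W₂.map α with hA2def
  set B1 := W₁.map β with hB1def
  set B2 := W₂.map β with hB2def
  have hA1 : IsWalk H (α q) (α v) A1 := h1.map_walk hα
  have hA2 : IsWalk H (α q) (α v) A2 := h2.map_walk hα
  have hB1 : IsWalk H (β q) (β v) B1 := h1.map_walk hβ
  have hB2 : IsWalk H (β q) (β v) B2 := h2.map_walk hβ
  have hC : IsWalk G q q (wcomp W₁ W₂.reverse) := h1.wcomp_walk h2.rev
  have htv' := htv _ hC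
  have hmapβ : (wcomp W₁ W₂.reverse).map β = B1 ++ B2.reverse.tail := by
    rw [map_wcomp, List.map_reverse, wcomp_def, hB1def, hB2def]
  have hmapα : (wcomp W₁ W₂.reverse).map α = A1 ++ A2.reverse.tail := by
    rw [map_wcomp, List.map_reverse, wcomp_def, hA1def, hA2def]
  rw [hmapβ, hmapα] at htv'
  simp only [wcomp_def, List.append_assoc] at htv'
  rw [tail_append_left hA1.ne_nil] at htv'
  simp only [List.append_assoc] at htv'
  -- htv' : PiEq (B1 ++ B2.reverse.tail) (Q.reverse ++ (A1.tail ++ (A2.reverse.tail ++ Q.tail)))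
  have hB2revne : B2.reverse ≠ [] := by simp [hB2.ne_nil]
  have u1 : PiEq (B1 ++ (B2.reverse.tail ++ B2.tail)) B1 := by
    have hcond : B1.getLast? = (B2.reverse ++ B2.tail).head? := by
      rw [head?_append_left hB2revne, List.head?_reverse, hB1.getLast?, hB2.getLast?]
    have hh := pe_glue_right (pe_rev_self B2 (β v) hB2.getLast?) hcond
    rw [tail_append_left hB2revne] at hh
    simpa using hh
  have u2 := pe_app_right htv' B2.tail
  simp only [List.append_assoc] at u2
  have hB1eq : PiEq B1
      (Q.reverse ++ (A1.tail ++ (A2.reverse.tail ++ (Q.tail ++ B2.tail)))) :=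
    u1.symm.trans u2
  have hXpl : (A1.reverse ++ Q.tail).getLast? = some (β q) := by
    have hcond : A1.reverse.getLast? = Q.head? := by
      rw [List.getLast?_reverse, hA1.head?, hQ.head?]
    rw [getLast?_append_tail hcond, hQ.getLast?]
  have u3 := pe_glue_right hB1eq (by rw [hXpl, hB1.head?])
  have hQrevne : Q.reverse ≠ [] := by simp [hQ.ne_nil]
  rw [tail_append_left hQrevne] at u3
  simp only [List.append_assoc] at u3
  have u4 : PiEq (A1.reverse ++ (Q ++ Q.reverse.tail).tail)
      (A1.reverse ++ ([α q] : List X).tail) :=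
    pe_glue_right (pe_self_rev Q (α q) hQ.head?)
      (by rw [List.getLast?_reverse, hA1.head?, head?_append_left hQ.ne_nil, hQ.head?])
  rw [tail_append_left hQ.ne_nil] at u4
  simp only [List.tail_cons, List.append_nil, List.append_assoc] at u4
  have u4' := pe_app_right u4 (A1.tail ++ (A2.reverse.tail ++ (Q.tail ++ B2.tail)))
  simp only [List.append_assoc] at u4'
  have u5 := pe_app_right (pe_rev_self A1 (α v) hA1.getLast?)
    (A2.reverse.tail ++ (Q.tail ++ B2.tail))
  simp only [List.append_assoc, List.singleton_append] at u5
  have hA2eq : A2.reverse = α v :: A2.reverse.tail := by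
    obtain ⟨T, hT⟩ := exists_cons_of_head?
      (show A2.reverse.head? = some (α v) by rw [List.head?_reverse, hA2.getLast?])
    rw [hT, List.tail_cons]
  have chain := u3.trans (u4'.trans u5)
  show PiEq ((A1.reverse ++ Q.tail) ++ B1.tail) ((A2.reverse ++ Q.tail) ++ B2.tail)
  rw [hA2eq]
  simp only [List.append_assoc, List.cons_append]
  simpa using chain


lemma mem_of_getLast?' {A : Type} {l : List A} {a : A} (h : l.getLast? = some a) : a ∈ l := by
  obtain ⟨l₀, rfl⟩ := exists_concat_of_getLast? h
  simp

lemma pe_concat_last {A : Type} {l : List A} {c : A} (h : l.getLast? = some c) :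
    PiEq (l ++ [c]) l := by
  obtain ⟨l₀, rfl⟩ := exists_concat_of_getLast? h
  simpa using pe_xx l₀ [] c

lemma colorWalk_append (τ : List (V → X)) (σ' : V → X) (v : V) :
    colorWalk (τ ++ [σ']) v = colorWalk τ v ++ [σ' v] := by
  simp [colorWalk]

/-- The walk `conj α β Wl Q` is a walk in `H` from `α v` to `β v`. -/
lemma conj_walk (hα : IsHom G H α) (hβ : IsHom G H β) (hQ : IsWalk H (α q) (β q) Q)
    {v : V} {Wl : List V} (hW : IsWalk G q v Wl) :
    IsWalk H (α v) (β v) (conj α β Wl Q) :=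
  (((hW.map_walk hα).rev).wcomp_walk hQ).wcomp_walk (hW.map_walk hβ)

lemma IsWalk.nf_walk {a b : X} {l : List X} (h : IsWalk H a b l) : IsWalk H a b (nf l) :=
  ⟨(pe_nf l).ne_nil h.ne_nil, by rw [nf_head?, h.head?], by rw [nf_getLast?, h.getLast?],
    nf_chain' h.chain'⟩

/-- conj of a walk extended by one vertex. -/
lemma conj_snoc {w : V} {Wl : List V} (hW : Wl ≠ []) :
    conj α β (Wl ++ [w]) Q = (α w :: conj α β Wl Q) ++ [β w] := by
  show ((Wl ++ [w]).map α).reverse ++ Q.tail ++ ((Wl ++ [w]).map β).tail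
      = (α w :: (((Wl.map α).reverse ++ Q.tail) ++ (Wl.map β).tail)) ++ [β w]
  rw [List.map_append, List.map_append, List.reverse_append,
    tail_append_left (by simp [hW] : Wl.map β ≠ [])]
  simp

/-- State for the reconfiguration algorithm. -/
structure BState (G : Dgraph V) (H : Dgraph X) (α β : V → X) (q : V) (Q : List X) :
    Type where
  τ : List (V → X)
  P : V → List X
  σ : V → X
  hA : AdjRecolSeq G H τ
  h0 : τ.head? = some α
  hL : τ.getLast? = some σ
  hpp : PushOrPull G τ
  hP : ∀ v, IsWalk H (σ v) (β v) (P v)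
  hPred : ∀ v, IsReduced (P v)
  hI2 : ∀ u w, G.UAdj u w → PiEq (σ u :: P w) (P u ++ [β w])
  hI3 : ∀ (v : V) (Wl : List V), IsWalk G q v Wl →
    PiEq (colorWalk τ v ++ (P v).tail) (conj α β Wl Q)

lemma BState.σ_hom (S : BState G H α β q Q) : IsHom G H S.σ :=
  S.hA.2.1 S.σ (mem_of_getLast?' S.hL)

/-- Initial state. -/
lemma bstate_init [Fintype V] (htv : TopValid G H α β q Q) (hα : IsHom G H α)
    (hβ : IsHom G H β) (hQ : IsWalk H (α q) (β q) Q) (hGconn : G.WConn) :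
    Nonempty (BState G H α β q Q) := by
  classical
  have hWf : ∀ v, ∃ l, IsWalk G q v l := fun v => hGconn q v
  set Wf : V → List V := fun v => Classical.choose (hWf v) with hWfdef
  have hWfw : ∀ v, IsWalk G q v (Wf v) := fun v => Classical.choose_spec (hWf v)
  set R : V → List X := fun v => nf (conj α β (Wf v) Q) with hRdef
  have hRw : ∀ v, IsWalk H (α v) (β v) (R v) := fun v =>
    (conj_walk hα hβ hQ (hWfw v)).nf_walk
  have hRpe : ∀ (v : V) (Wl : List V), IsWalk G q v Wl → PiEq (R v) (conj α β Wl Q) :=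
    fun v Wl hWl => (pe_nf _).symm.trans (conj_indep htv hQ hα hβ (hWfw v) hWl)
  refine ⟨⟨[α], R, α, ⟨by simp, ?_, List.chain'_singleton _⟩, by simp, by simp,
    List.chain'_singleton _, hRw, fun v => isReduced_nf _, ?_, ?_⟩⟩
  · intro σ hσ
    obtain rfl : σ = α := by simpa using hσ
    exact hα
  · -- I2
    intro u w huw
    have hWuw : IsWalk G q w (Wf u ++ [w]) := (hWfw u).snoc huw
    have c1 : PiEq (R w) ((α w :: conj α β (Wf u) Q) ++ [β w]) := by
      have := hRpe w (Wf u ++ [w]) hWuw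
      rwa [conj_snoc (hWfw u).ne_nil] at this
    have c2 : PiEq ((α w :: conj α β (Wf u) Q) ++ [β w]) ((α w :: R u) ++ [β w]) :=
      pe_app_right (pe_cons (hRpe u (Wf u) (hWfw u)).symm (α w)) _
    have c3 : PiEq (R w) ((α w :: R u) ++ [β w]) := c1.trans c2
    obtain ⟨Tu, hTu⟩ := exists_cons_of_head? (hRw u).head?
    have base := pe_cons c3 (α u)
    have key : PiEq (α u :: ((α w :: R u) ++ [β w])) (R u ++ [β w]) := by
      rw [hTu]
      simpa using pe_xyx [] (Tu ++ [β w]) (α u) (α w)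
    exact base.trans key
  · -- I3
    intro v Wl hWl
    have hh : colorWalk [α] v ++ (R v).tail = R v := by
      obtain ⟨T, hT⟩ := exists_cons_of_head? (hRw v).head?
      rw [hT]
      rfl
    rw [hh]
    exact hRpe v Wl hWl

/-- One move of the algorithm. -/
lemma bstate_step [Fintype V] (hHsym : H.IsSymmetric) (hHrefl : H.IsReflexive)
    (S : BState G H α β q Q) {v : V} {b : X} {rest : List X}
    (hPv : S.P v = S.σ v :: b :: rest)
    (hmov : ∀ w, G.UAdj v w → S.σ w = S.σ v ∨ S.σ w = b) :
    ∃ S' : BState G H α β q Q,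
      (∑ u, wlen (S'.P u)) + 1 = ∑ u, wlen (S.P u) := by
  classical
  revert hPv hmov
  obtain ⟨τ, P, σ, hA, h0, hL, hpp, hP, hPred, hI2, hI3⟩ := S
  intro hPv hmov
  dsimp only at hPv hmov ⊢
  have hbne : σ v ≠ b := by
    have := hPv ▸ hPred v
    exact this.front2
  have hadjb : H.UAdj (σ v) b := by
    have hch := (hPv ▸ (hP v).chain')
    rw [List.chain'_cons] at hch
    exact hch.1
  have hAdjb : H.Adj (σ v) b := hadjb.elim id (fun h' => hHsym _ _ h')
  have hAdjb' : H.Adj b (σ v) := hadjb.elim (fun h' => hHsym _ _ h') id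
  set σ' : V → X := Function.update σ v b with hσ'def
  have hσ'v : σ' v = b := by simp [hσ'def]
  have hσ'u : ∀ u, u ≠ v → σ' u = σ u := fun u hu => Function.update_of_ne hu _ _
  have hσhom : IsHom G H σ := hA.2.1 σ (mem_of_getLast?' hL)
  have hσ'hom : IsHom G H σ' := by
    intro x y hxy
    by_cases hx : x = v <;> by_cases hy : y = v
    · subst hx; subst hy
      rw [hσ'v]
      exact hHrefl b
    · subst hx
      rw [hσ'v, hσ'u y hy]
      rcases hmov y (Or.inl hxy) with hc | hc
      · rw [hc]; exact hAdjb'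
      · rw [hc]; exact hHrefl b
    · subst hy
      rw [hσ'v, hσ'u x hx]
      rcases hmov x (Or.inr hxy) with hc | hc
      · rw [hc]; exact hAdjb
      · rw [hc]; exact hHrefl b
    · rw [hσ'u x hx, hσ'u y hy]
      exact hσhom hxy
  set P' : V → List X := Function.update P v (b :: rest) with hP'def
  have hP'v : P' v = b :: rest := by simp [hP'def]
  have hP'u : ∀ u, u ≠ v → P' u = P u := fun u hu => Function.update_of_ne hu _ _
  have hτne : τ ≠ [] := hA.1
  have hrel : (∃! u, σ u ≠ σ' u) ∧ ∀ u, σ u ≠ σ' u → H.Adj (σ u) (σ' u) := by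
    constructor
    · refine ⟨v, by show σ v ≠ σ' v; rw [hσ'v]; exact hbne, fun u hu => ?_⟩
      by_contra hne
      exact hu (by rw [hσ'u u hne])
    · intro u hu
      have : u = v := by
        by_contra hne
        exact hu (by rw [hσ'u u hne])
      subst this
      rw [hσ'v]
      exact hAdjb
  have hppstep : ∀ u, σ u ≠ σ' u → ∀ w, G.UAdj u w → σ w = σ u ∨ σ w = σ' u := by
    intro u hu w huw
    have : u = v := by
      by_contra hne
      exact hu (by rw [hσ'u u hne])
    subst this
    rw [hσ'v]
    exact hmov w huw
  refine ⟨⟨τ ++ [σ'], P', σ', ⟨by simp, ?_, ?_⟩, by rw [head?_append_left hτne]; exact h0,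
    by simp, ?_, ?_, ?_, ?_, ?_⟩, ?_⟩
  · -- all homs
    intro φ hφ
    rcases List.mem_append.mp hφ with hmem | hmem
    · exact hA.2.1 φ hmem
    · obtain rfl : φ = σ' := by simpa using hmem
      exact hσ'hom
  · -- chain' adjacency
    rw [List.chain'_append]
    refine ⟨hA.2.2, by simp, fun x hx y hy => ?_⟩
    obtain rfl : σ = x := by rw [hL] at hx; simpa using hx
    obtain rfl : σ' = y := by simpa using hy
    exact hrel
  · -- push or pull
    rw [PushOrPull, List.chain'_append]
    refine ⟨hpp, by simp, fun x hx y hy => ?_⟩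
    obtain rfl : σ = x := by rw [hL] at hx; simpa using hx
    obtain rfl : σ' = y := by simpa using hy
    exact hppstep
  · -- hP
    intro u
    by_cases hu : u = v
    · subst hu
      rw [hP'v, hσ'v]
      have := hPv ▸ hP u
      exact this.uncons.2.2
    · rw [hP'u u hu, hσ'u u hu]
      exact hP u
  · -- hPred
    intro u
    by_cases hu : u = v
    · subst hu
      rw [hP'v]
      exact (hPv ▸ hPred u).tail
    · rw [hP'u u hu]
      exact hPred u
  · -- hI2
    intro u w huw
    by_cases hu : u = v <;> by_cases hw : w = v
    · subst hu; subst hw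
      rw [hσ'v, hP'v]
      have hlast : (b :: rest).getLast? = some (β w) := by
        have := (hPv ▸ hP w).getLast?
        rwa [List.getLast?_cons_cons] at this
      exact (pe_dd b rest).trans (pe_concat_last hlast).symm
    · subst hu
      rw [hσ'v, hP'v, hP'u w hw]
      obtain ⟨Tw, hTw⟩ := exists_cons_of_head? (hP w).head?
      have old := hI2 u w huw
      rw [hPv] at old
      rcases hmov w huw with hc | hc
      · -- σ w = σ u
        have glue := pe_glue_right old (by simp [hTw, hc] : ([b, σ u] : List X).getLast?
           = (σ u :: P w).head?)
        simp only [List.tail_cons] at glue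
        have lhs_link : PiEq (b :: P w) ([b, σ u] ++ P w) := by
          rw [hTw, hc]
          exact (pe_dd2 b (σ u) Tw).symm
        have rhs_link : PiEq ([b, σ u] ++ ((σ u :: b :: rest) ++ [β w]).tail)
            ((b :: rest) ++ [β w]) := by
          simp only [List.cons_append, List.tail_cons]
          exact pe_aba b (σ u) (rest ++ [β w])
        refine lhs_link.trans ?_
        have := glue
        simp only [List.cons_append, List.tail_cons] at this rhs_link ⊢
        exact this.trans rhs_link
      · -- σ w = b
        have hPwhead : (P w).head? = some b := by rw [(hP w).head?, hc]
        have old' : PiEq (σ u :: P w) (σ u :: ((b :: rest) ++ [β w])) := by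
          simpa using old
        have cc := pe_cancel_cons hPwhead (by simp) old'
        have hbPw : PiEq (b :: P w) (P w) := by
          rw [hTw, hc]
          exact pe_dd b Tw
        exact hbPw.trans cc
    · subst hw
      rw [hP'v, hP'u u hu, hσ'u u hu]
      have old := hI2 u w huw
      rw [hPv] at old
      rcases hmov u huw.symm with hc | hc
      · rw [hc] at old ⊢
        exact (pe_dd (σ w) (b :: rest)).symm.trans old
      · rw [hc] at old ⊢
        exact (pe_dd b rest).trans ((pe_aba b (σ w) rest).symm.trans old)
    · rw [hσ'u u hu, hP'u u hu, hP'u w hw]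
      exact hI2 u w huw
  · -- hI3
    intro u Wl hWl
    rw [colorWalk_append]
    by_cases hu : u = v
    · subst hu
      rw [hP'v, hσ'v]
      have old := hI3 u Wl hWl
      rw [hPv] at old
      have heq : (colorWalk τ u ++ [b]) ++ rest = colorWalk τ u ++ (σ u :: b :: rest).tail := by
        simp
      rw [show (b :: rest).tail = rest from rfl, heq]
      exact old
    · rw [hP'u u hu, hσ'u u hu]
      obtain ⟨cw₀, hcw⟩ := exists_concat_of_getLast? (colorWalk_getLast? hL u)
      have link : PiEq ((colorWalk τ u ++ [σ u]) ++ (P u).tail)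
          (colorWalk τ u ++ (P u).tail) := by
        rw [hcw]
        simpa using pe_xx cw₀ ((P u).tail) (σ u)
      exact link.trans (hI3 u Wl hWl)
  · -- measure
    have hupd : (fun u => wlen (P' u)) = Function.update (fun u => wlen (P u)) v rest.length := by
      funext u
      by_cases hu : u = v
      · subst hu
        rw [hP'v, Function.update_self]
        simp [wlen]
      · rw [hP'u u hu, Function.update_of_ne hu]
    rw [show ∑ u, wlen (P' u) = ∑ u, (fun u => wlen (P' u)) u from rfl, hupd]
    rw [Finset.sum_update_of_mem (Finset.mem_univ v)]
    rw [← Finset.add_sum_erase Finset.univ _ (Finset.mem_univ v)]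
    rw [hPv, Finset.erase_eq]
    simp [wlen]
    omega


section DeadlockAux
variable {A : Type}

lemma isReduced_reverse {l : List A} (h : IsReduced l) : IsReduced l.reverse := by
  intro l' hs
  have := hs.rev
  rw [List.reverse_reverse] at this
  exact h _ this

lemma isReduced_append_left {x y : List A} (h : IsReduced (x ++ y)) : IsReduced x :=
  fun l' hs => h _ (hs.append_right y)

lemma nf_append_single {l : List A} (hred : IsReduced l) (hne : l ≠ []) (c : A) :
    nf (l ++ [c]) = l ++ [c] ∨ nf (l ++ [c]) = l ∨ nf (l ++ [c]) = l.dropLast := by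
  obtain ⟨l₀, d, rfl⟩ := (l.eq_nil_or_concat).resolve_left hne
  rw [List.concat_eq_append] at *
  by_cases hdc : d = c
  · right; left
    subst hdc
    have hpe : PiEq ((l₀ ++ [d]) ++ [d]) (l₀ ++ [d]) := by simpa using pe_xx l₀ [] d
    exact (nf_piEq hpe).trans (nf_of_isReduced hred)
  · by_cases hpen : l₀.getLast? = some c
    · right; right
      obtain ⟨l₁, rfl⟩ := exists_concat_of_getLast? hpen
      have hpe : PiEq (((l₁ ++ [c]) ++ [d]) ++ [c]) (l₁ ++ [c]) := by
        simpa using pe_xyx l₁ [] c d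
      have hred' : IsReduced (l₁ ++ [c]) := isReduced_append_left hred
      rw [List.dropLast_concat]
      exact (nf_piEq hpe).trans (nf_of_isReduced hred')
    · left
      apply nf_of_isReduced
      have hrev : IsReduced (c :: d :: l₀.reverse) := by
        refine isReduced_cons ?_ (by simpa using hdc) (by simpa using hpen)
        have := isReduced_reverse hred
        simpa using this
      have := isReduced_reverse hrev
      simpa using this

lemma rstep1_length_le (x : A) (r : List A) : (rstep1 x r).length ≤ r.length + 1 := by
  match r with
  | [] => simp [rstep1]
  | y :: ys =>
    by_cases hxy : x = y
    · subst hxy; rw [rstep1_cons_eq]; simp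
    · by_cases hh : ys.head? = some x
      · rw [rstep1_cancel hxy hh]; simp; omega
      · rw [rstep1_ext hxy hh]; simp

lemma nf_length_le (l : List A) : (nf l).length ≤ l.length := by
  induction l with
  | nil => simp [nf]
  | cons x l ih =>
    rw [nf_cons]
    calc (rstep1 x (nf l)).length ≤ (nf l).length + 1 := rstep1_length_le x (nf l)
    _ ≤ l.length + 1 := by omega
    _ = (x :: l).length := by simp

/-- Possible shapes of `rstep1 c r` equal to `[c]`. -/
lemma rstep1_eq_single {c : A} {r : List A} (h : rstep1 c r = [c]) :
    r = [] ∨ r = [c] ∨ ∃ y, r = [y, c] ∧ y ≠ c := by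
  match r with
  | [] => exact Or.inl rfl
  | y :: ys =>
    by_cases hxy : c = y
    · subst hxy
      rw [rstep1_cons_eq] at h
      right; left
      rw [h]
    · by_cases hh : ys.head? = some c
      · rw [rstep1_cancel hxy hh] at h
        subst h
        right; right
        exact ⟨y, rfl, Ne.symm hxy⟩
      · rw [rstep1_ext hxy hh] at h
        simp at h

end DeadlockAux

section DeadlockAux2
variable {A : Type}

lemma blocked_shape {su sw b bw : A} {rest Lw : List A}
    (hLu_red : IsReduced (su :: b :: rest)) (hLw_red : IsReduced Lw)
    (hLw_head : Lw.head? = some sw)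
    (hsw_su : sw ≠ su) (hsw_b : sw ≠ b)
    (hpe : PiEq (su :: Lw) ((su :: b :: rest) ++ [bw])) :
    ∃ rest', Lw = sw :: su :: rest' := by
  obtain ⟨tw, rfl⟩ := exists_cons_of_head? hLw_head
  by_cases hcase : tw.head? = some su
  · obtain ⟨rest', rfl⟩ := exists_cons_of_head? hcase
    exact ⟨rest', rfl⟩
  · exfalso
    have hnfeq := nf_piEq hpe
    have hLHS : nf (su :: sw :: tw) = su :: sw :: tw := by
      rw [nf_cons, nf_of_isReduced hLw_red, rstep1_ext (Ne.symm hsw_su) hcase]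
    rcases nf_append_single hLu_red (by simp) bw with hc | hc | hc
    · rw [hLHS, hc] at hnfeq
      apply hsw_b
      have := congrArg (fun l => l.tail.head?) hnfeq
      simpa using this
    · rw [hLHS, hc] at hnfeq
      apply hsw_b
      have := congrArg (fun l => l.tail.head?) hnfeq
      simpa using this
    · rw [hLHS, hc] at hnfeq
      rcases rest with _ | ⟨r0, rest'⟩
      · simp at hnfeq
      · apply hsw_b
        have := congrArg (fun l => l.tail.head?) hnfeq
        simpa using this

lemma cond2_shape {ax bx : A} {Pv XX : List A} (hred : IsReduced Pv)
    (h1 : PiEq Pv (ax :: XX)) (h2 : PiEq (bx :: XX) [bx]) :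
    Pv = [ax] ∨ (Pv = [ax, bx] ∧ ax ≠ bx) ∨
      (∃ y, Pv = [ax, y, bx] ∧ ax ≠ y ∧ y ≠ bx ∧ ax ≠ bx) := by
  have hr2 : rstep1 bx (nf XX) = [bx] := by
    have := nf_piEq h2
    rw [nf_of_isReduced (isReduced_singleton bx), nf_cons] at this
    exact this
  have hPv : Pv = rstep1 ax (nf XX) := by
    have := nf_piEq h1
    rw [nf_of_isReduced hred, nf_cons] at this
    exact this
  rcases rstep1_eq_single hr2 with hc | hc | ⟨y, hc, hy⟩
  · rw [hc] at hPv
    left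
    rw [hPv]
    rfl
  · rw [hc] at hPv
    by_cases hab : ax = bx
    · left
      rw [hPv]
      subst hab
      rw [rstep1_cons_eq]
    · right; left
      rw [hPv, rstep1_ext hab (by simp)]
      exact ⟨rfl, hab⟩
  · rw [hc] at hPv
    by_cases hay : ax = y
    · right; left
      subst hay
      rw [hPv, rstep1_cons_eq]
      exact ⟨rfl, hy⟩
    · by_cases hab : bx = ax
      · left
        rw [hPv, rstep1_cancel hay (by simp [hab]), hab]
      · right; right
        rw [hPv, rstep1_ext hay (by simpa using hab)]
        exact ⟨y, rfl, hay, hy, Ne.symm hab⟩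

lemma pair_32_false {su sw yu bu : A}
    (hsyu : su ≠ yu) (hyb : yu ≠ bu) (hsb : su ≠ bu) (hws : sw ≠ su)
    (hpe : PiEq (su :: [sw, su]) ([su, yu, bu] ++ [su])) : False := by
  have hnfeq := nf_piEq hpe
  have hL : nf [su, sw, su] = [su] := by
    rw [show ([su, sw, su] : List A) = su :: sw :: [su] from rfl, nf_cons, nf_cons,
      nf_of_isReduced (isReduced_singleton su),
      rstep1_ext hws (by simp), rstep1_cancel (fun h => hws h.symm) (by simp)]
  have hR : nf ([su, yu, bu] ++ [su]) = [su, yu, bu, su] := by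
    show nf (su :: yu :: bu :: [su]) = _
    rw [nf_cons, nf_cons, nf_cons, nf_of_isReduced (isReduced_singleton su),
      rstep1_ext (Ne.symm hsb) (by simp),
      rstep1_ext hyb (by simpa using hsyu),
      rstep1_ext hsyu (by simpa using Ne.symm hsb)]
  rw [hL, hR] at hnfeq
  simp at hnfeq

lemma pair_33 {su sw yu bu bw : A}
    (hsyu : su ≠ yu) (hyb : yu ≠ bu) (hsb : su ≠ bu)
    (hws : sw ≠ su) (hsbw : su ≠ bw) (hwbw : sw ≠ bw)
    (hpe : PiEq (su :: [sw, su, bw]) ([su, yu, bu] ++ [bw])) : bw = yu := by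
  have hnfeq := nf_piEq hpe
  have hL : nf [su, sw, su, bw] = [su, bw] := by
    show nf (su :: sw :: su :: [bw]) = _
    rw [nf_cons, nf_cons, nf_cons, nf_of_isReduced (isReduced_singleton bw),
      rstep1_ext hsbw (by simp),
      rstep1_ext hws (by simpa using Ne.symm hwbw),
      rstep1_cancel (fun h => hws h.symm) (by simp)]
  by_cases hbb : bu = bw
  · exfalso
    have hR : nf ([su, yu, bu] ++ [bw]) = [su, yu, bw] := by
      show nf (su :: yu :: bu :: [bw]) = _
      have e1 : rstep1 bu [bw] = [bw] := by rw [hbb, rstep1_cons_eq]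
      rw [nf_cons, nf_cons, nf_cons, nf_of_isReduced (isReduced_singleton bw), e1,
        rstep1_ext (hbb ▸ hyb) (by simp),
        rstep1_ext hsyu (by simpa using Ne.symm (hbb ▸ hsb))]
    rw [hL, hR] at hnfeq
    simp at hnfeq
  · by_cases hbyu : bw = yu
    · exact hbyu
    · exfalso
      have hR : nf ([su, yu, bu] ++ [bw]) = [su, yu, bu, bw] := by
        show nf (su :: yu :: bu :: [bw]) = _
        rw [nf_cons, nf_cons, nf_cons, nf_of_isReduced (isReduced_singleton bw),
          rstep1_ext hbb (by simp),
          rstep1_ext hyb (by simpa using hbyu),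
          rstep1_ext hsyu (by simpa using Ne.symm hsb)]
      rw [hL, hR] at hnfeq
      simp at hnfeq

end DeadlockAux2

lemma isReduced3 {A : Type} {x y z : A} (h1 : x ≠ y) (h2 : y ≠ z) (h3 : x ≠ z) :
    IsReduced [x, y, z] :=
  isReduced_cons (isReduced_pair h2) (by simpa using Ne.symm h1) (by simpa using Ne.symm h3)

lemma isReduced4 {A : Type} {x y z w : A} (h1 : x ≠ y) (h2 : y ≠ z) (h3 : z ≠ w)
    (h4 : x ≠ z) (h5 : y ≠ w) : IsReduced [x, y, z, w] :=
  isReduced_cons (isReduced3 h2 h3 h5) (by simpa using Ne.symm h1) (by simpa using Ne.symm h4)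

lemma kill_gen {A : Type} {l R : List A} (h : PiEq l R) (hR : IsReduced R)
    (hlen : l.length < R.length) : False := by
  have h1 := nf_piEq h
  rw [nf_of_isReduced hR] at h1
  have h2 := nf_length_le l
  rw [h1] at h2
  omega

lemma get_append_plus {A : Type} (p r : List A) (k : ℕ) (hk : k < r.length)
    (H : p.length + k < (p ++ r).length) :
    (p ++ r).get ⟨p.length + k, H⟩ = r.get ⟨k, hk⟩ := by
  rw [List.get_eq_getElem, List.get_eq_getElem, List.getElem_append_right' p hk]
  congr 1
  simp [Nat.add_comm]

lemma isReduced_of_get {A : Type} {l : List A}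
    (h1 : ∀ (k : ℕ) (hk : k + 1 < l.length), l.get ⟨k, by omega⟩ ≠ l.get ⟨k + 1, hk⟩)
    (h2 : ∀ (k : ℕ) (hk : k + 2 < l.length), l.get ⟨k, by omega⟩ ≠ l.get ⟨k + 2, hk⟩) :
    IsReduced l := by
  rintro l' (⟨p, s, x, y, hl, -⟩ | ⟨p, s, x, hl, -⟩)
  · rw [List.append_assoc] at hl
    subst hl
    have hlen : p.length + 2 < (p ++ ([x, y, x] ++ s)).length := by simp
    refine h2 p.length hlen ?_
    have e1 : (p ++ ([x, y, x] ++ s)).get ⟨p.length, by omega⟩ = x := by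
      rw [get_congr (by omega : p.length = p.length + 0),
        get_append_plus p ([x, y, x] ++ s) 0 (by simp) (by simp)]
      rfl
    have e2 : (p ++ ([x, y, x] ++ s)).get ⟨p.length + 2, hlen⟩ = x := by
      rw [get_append_plus p ([x, y, x] ++ s) 2 (by simp) (by simp)]
      rfl
    rw [e1, e2]
  · rw [List.append_assoc] at hl
    subst hl
    have hlen : p.length + 1 < (p ++ ([x, x] ++ s)).length := by simp
    refine h1 p.length hlen ?_
    have e1 : (p ++ ([x, x] ++ s)).get ⟨p.length, by omega⟩ = x := by
      rw [get_congr (by omega : p.length = p.length + 0),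
        get_append_plus p ([x, x] ++ s) 0 (by simp) (by simp)]
      rfl
    have e2 : (p ++ ([x, x] ++ s)).get ⟨p.length + 1, hlen⟩ = x := by
      rw [get_append_plus p ([x, x] ++ s) 1 (by simp) (by simp)]
      rfl
    rw [e1, e2]

lemma isWalk_cons {a b c : V} {l : List V} (hadj : G.UAdj a b) (h : IsWalk G b c l) :
    IsWalk G a c (a :: l) := by
  obtain ⟨t, rfl⟩ := exists_cons_of_head? h.head?
  refine ⟨by simp, by simp, ?_, ?_⟩
  · rw [List.getLast?_cons_cons]
    exact h.getLast?
  · rw [List.chain'_cons]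
    exact ⟨hadj, h.chain'⟩

lemma diamond_rel {Qw A B : List X} {av au bu bv t0 : X}
    (hAlast : A.reverse.getLast? = some av)
    (hB : B.head? = some bv) (hBt : B.tail.head? = some t0)
    (E1 : PiEq Qw (A.reverse ++ B.tail))
    (E2 : PiEq Qw (A.reverse ++ (au :: av :: bu :: B))) :
    PiEq [av, t0] [av, bu, bv, t0] := by
  have h0 := E1.symm.trans E2
  have hcl := pe_cancel_left hAlast h0
  have h1 : PiEq (av :: B.tail) (av :: bu :: B) := hcl.trans (pe_aba av au (bu :: B))
  obtain ⟨B', rfl⟩ := exists_cons_of_head? hB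
  have hBt' : B'.head? = some t0 := by simpa using hBt
  have h1' : PiEq ([av] ++ B') ([av, bu, bv] ++ B') := h1
  simpa using pe_cancel_right hBt' h1'


lemma bstate_deadlock [Fintype V] (hGconn : G.WConn)
    (hα : IsHom G H α) (hβ : IsHom G H β) (hQ : IsWalk H (α q) (β q) Q)
    (hc2 : ∀ (v₀ : V) (C : List V), IsWalk G v₀ v₀ C → IsCycReduced (C.map α) →
      ∀ v ∈ C, ∀ Wl : List V, IsWalk G v q Wl →
        PiEq Q (wcomp (Wl.map α).reverse (Wl.map β)))
    (S : BState G H α β q Q)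
    (hnz : ¬∀ v, wlen (S.P v) = 0)
    (hnomove : ¬∃ (v : V) (b : X) (rest : List X),
      S.P v = S.σ v :: b :: rest ∧ ∀ w, G.UAdj v w → S.σ w = S.σ v ∨ S.σ w = b) :
    False := by
  classical
  have hdecomp : ∀ v, 2 ≤ (S.P v).length → ∃ b rest, S.P v = S.σ v :: b :: rest := by
    intro v hv
    obtain ⟨t, ht⟩ := exists_cons_of_head? (S.hP v).head?
    rcases t with _ | ⟨b, rest⟩
    · rw [ht] at hv; simp at hv
    · exact ⟨b, rest, ht⟩
  obtain ⟨v₀, hv₀⟩ : ∃ v, 2 ≤ (S.P v).length := by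
    by_contra h
    push_neg at h
    apply hnz
    intro v
    have := h v
    simp [wlen]
    omega
  have hstep : ∀ v, 2 ≤ (S.P v).length → ∃ w, G.UAdj v w ∧ 2 ≤ (S.P w).length ∧
      (S.P w).tail.head? = some (S.σ v) ∧ S.σ w ≠ S.σ v ∧
      (S.P v).tail.head? ≠ some (S.σ w) := by
    intro v hv
    obtain ⟨b, rest, hPv⟩ := hdecomp v hv
    have hbl : ∃ w, G.UAdj v w ∧ S.σ w ≠ S.σ v ∧ S.σ w ≠ b := by
      by_contra h
      push_neg at h
      refine hnomove ⟨v, b, rest, hPv, fun w hw => ?_⟩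
      by_cases h1 : S.σ w = S.σ v
      · exact Or.inl h1
      · exact Or.inr (h w hw h1)
    obtain ⟨w, hww, hws, hwb⟩ := hbl
    have hpe := S.hI2 v w hww
    rw [hPv] at hpe
    obtain ⟨rest', hPw⟩ := blocked_shape (hPv ▸ S.hPred v) (S.hPred w) (S.hP w).head?
      hws hwb hpe
    refine ⟨w, hww, by rw [hPw]; simp, by rw [hPw]; rfl, hws, ?_⟩
    rw [hPv]
    simpa using Ne.symm hwb
  let T := {v : V // 2 ≤ (S.P v).length}
  let nx : T → T := fun t => ⟨(hstep t.1 t.2).choose, (hstep t.1 t.2).choose_spec.2.1⟩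
  let gT : ℕ → T := fun n => nx^[n] ⟨v₀, hv₀⟩
  let g : ℕ → V := fun n => (gT n).1
  have hgsucc : ∀ n, gT (n + 1) = nx (gT n) := fun n => Function.iterate_succ_apply' nx n _
  have hg2 : ∀ n, 2 ≤ (S.P (g n)).length := fun n => (gT n).2
  have hspec : ∀ n, G.UAdj (g n) (g (n + 1)) ∧
      (S.P (g (n + 1))).tail.head? = some (S.σ (g n)) ∧
      S.σ (g (n + 1)) ≠ S.σ (g n) ∧
      (S.P (g n)).tail.head? ≠ some (S.σ (g (n + 1))) := by
    intro n
    have hs := (hstep (g n) (hg2 n)).choose_spec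
    have hgn1 : g (n + 1) = (hstep (g n) (hg2 n)).choose := by
      show (gT (n + 1)).1 = _
      rw [hgsucc n]
    rw [hgn1]
    exact ⟨hs.1, hs.2.2.1, hs.2.2.2.1, hs.2.2.2.2⟩
  set a : ℕ → X := fun n => S.σ (g n) with hadef
  have ha1 : ∀ n, a (n + 1) ≠ a n := fun n => (hspec n).2.2.1
  have ha2 : ∀ n, a (n + 2) ≠ a n := by
    intro n heq
    have h1 := (hspec (n + 1)).2.2.2
    have h2 := (hspec n).2.1
    rw [show a (n + 2) = S.σ (g (n + 1 + 1)) from rfl] at heq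
    rw [heq] at h1
    exact h1 h2
  obtain ⟨i', j', hne, hgeq⟩ := Finite.exists_ne_map_eq_of_infinite gT
  obtain ⟨i, j, hij, hgij⟩ : ∃ i j, i < j ∧ gT i = gT j := by
    rcases lt_or_gt_of_ne hne with h | h
    exacts [⟨i', j', h, hgeq⟩, ⟨j', i', h, hgeq.symm⟩]
  set m := j - i with hm
  have hm1 : 1 ≤ m := by omega
  have hgji : g j = g i := (congrArg Subtype.val hgij).symm
  have hper : ∀ t, gT (t + j) = gT (t + i) := by
    intro t
    show nx^[t + j] _ = nx^[t + i] _
    rw [Function.iterate_add_apply, Function.iterate_add_apply]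
    exact congrArg _ hgij.symm
  have hperg : ∀ t, g (t + j) = g (t + i) := fun t => congrArg Subtype.val (hper t)
  have hm3 : 3 ≤ m := by
    rcases (by omega : m = 1 ∨ m = 2 ∨ 3 ≤ m) with h1 | h1 | h1
    · exfalso
      apply ha1 i
      show S.σ (g (i + 1)) = S.σ (g i)
      rw [show i + 1 = j from by omega, hgji]
    · exfalso
      apply ha2 i
      show S.σ (g (i + 2)) = S.σ (g i)
      rw [show i + 2 = j from by omega, hgji]
    · exact h1
  set D : List V := (List.range (m + 1)).map (fun t => g (i + t)) with hDdef
  have hDlen : D.length = m + 1 := by simp [hDdef]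
  have hDget : ∀ (k : ℕ) (hk : k < D.length), D.get ⟨k, hk⟩ = g (i + k) := by
    intro k hk
    simp [hDdef]
  have hDwalk : IsWalk G (g i) (g i) D := by
    refine ⟨by simp [hDdef], ?_, ?_, ?_⟩
    · rw [hDdef, List.range_succ_eq_map]
      simp
    · rw [hDdef, List.range_succ]
      rw [List.map_append, getLast?_append_right (by simp)]
      simp [show i + m = j from by omega, hgji]
    · rw [List.chain'_iff_get]
      intro k hk
      rw [hDget k (by omega), hDget (k + 1) (by omega)]
      rw [show i + (k + 1) = i + k + 1 from by omega]
      exact (hspec (i + k)).1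
  have hMget : ∀ (k : ℕ) (hk : k < (D.map S.σ).length),
      (D.map S.σ).get ⟨k, hk⟩ = a (i + k) := by
    intro k hk
    rw [List.get_map, hDget k (by simpa using hk)]
  have hcycne : a (i + 1) ≠ a (j - 1) := by
    intro heq
    have h1 := (hspec i).2.2.2
    have h2 := (hspec (j - 1)).2.1
    rw [show j - 1 + 1 = j from by omega, hgji] at h2
    rw [show S.σ (g (i + 1)) = a (i + 1) from rfl, heq, ← h2] at h1
    exact h1 rfl
  have hDtightσ : IsCycReduced (D.map S.σ) := by
    constructor
    · refine isReduced_of_get (fun k hk => ?_) (fun k hk => ?_)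
      · rw [hMget k (by omega), hMget (k + 1) hk,
          show i + (k + 1) = (i + k) + 1 from by omega]
        exact Ne.symm (ha1 (i + k))
      · rw [hMget k (by omega), hMget (k + 2) hk,
          show i + (k + 2) = (i + k) + 2 from by omega]
        exact Ne.symm (ha2 (i + k))
    · refine ⟨by simp [hDlen]; omega, ?_⟩
      rw [hMget 1 (by simp [hDlen]; omega)]
      rw [hMget ((D.map S.σ).length - 2) (by simp [hDlen])]
      rw [show i + ((D.map S.σ).length - 2) = j - 1 from by simp [hDlen]; omega]
      exact hcycne
  -- freezing
  have hppflip : PushOrPull G S.τ.reverse := by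
    rw [PushOrPull, List.chain'_reverse]
    have hcomb := chain'_and (S.hA.2.2.imp (fun _ _ h => h.1)) S.hpp
    refine hcomb.imp (fun φ ψ hc => ?_)
    obtain ⟨hUC, hPP⟩ := hc
    intro u hu w hw
    obtain ⟨z, hz, huniq⟩ := hUC
    by_cases hwu : w = u
    · subst hwu
      exact Or.inl rfl
    · have hww : φ w = ψ w := by
        by_contra hne'
        exact hwu ((huniq w hne').trans (huniq u (fun h => hu h.symm)).symm)
      rcases hPP u (fun h => hu h.symm) w hw with hc1 | hc1
      · right
        rw [← hww]
        exact hc1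
      · left
        rw [← hww]
        exact hc1
  have h0rev : S.τ.reverse.head? = some S.σ := by
    rw [List.head?_reverse]
    exact S.hL
  have hfr0 := lemA hppflip h0rev hDwalk hDtightσ
  have hfrτ : ∀ φ ∈ S.τ, ∀ x ∈ D, φ x = S.σ x := fun φ hφ =>
    hfr0 φ (by simpa using hφ)
  have hαmem : α ∈ S.τ := by
    obtain ⟨t, ht⟩ := exists_cons_of_head? S.h0
    rw [ht]
    simp
  have hfrα : ∀ x ∈ D, α x = S.σ x := hfrτ α hαmem
  have hDtightα : IsCycReduced (D.map α) := by
    rwa [List.map_congr_left (fun x hx => hfrα x hx)]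
  -- membership of all g n, n ≥ i
  have hmemD : ∀ n, i ≤ n → g n ∈ D := by
    intro n
    induction n using Nat.strong_induction_on with
    | _ n ih =>
      intro hn
      by_cases hnj : n ≤ j
      · have he : g n = g (i + (n - i)) := by congr 1; omega
        rw [he, hDdef]
        exact List.mem_map.2 ⟨n - i, List.mem_range.2 (by omega), rfl⟩
      · have h2 : g n = g (n - m) := by
          have := hperg (n - j)
          rw [show n - j + j = n from by omega, show n - j + i = n - m from by omega] at this
          exact this
        rw [h2]
        exact ih (n - m) (by omega) (by omega)
  -- shapes from condition 2
  have hshape : ∀ x ∈ D, S.P x = [S.σ x] ∨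
      (S.P x = [S.σ x, β x] ∧ S.σ x ≠ β x) ∨
      (∃ y, S.P x = [S.σ x, y, β x] ∧ S.σ x ≠ y ∧ y ≠ β x ∧ S.σ x ≠ β x) := by
    intro x hx
    obtain ⟨Wl, hWl⟩ := hGconn q x
    set A := Wl.map α with hAdef
    set B := Wl.map β with hBdef
    have hA : IsWalk H (α q) (α x) A := hWl.map_walk hα
    have hB : IsWalk H (β q) (β x) B := hWl.map_walk hβ
    have hconst : PiEq (colorWalk S.τ x) [S.σ x] := by
      refine pe_const (fun y hy => ?_) (colorWalk_ne_nil S.hA.1 x)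
      obtain ⟨φ, hφ, rfl⟩ := List.mem_map.mp hy
      exact hfrτ φ hφ x hx
    have hPx : PiEq (S.P x) (conj α β Wl Q) := by
      have h3 := S.hI3 x Wl hWl
      have happ := pe_app_right hconst ((S.P x).tail)
      have hPeq : [S.σ x] ++ (S.P x).tail = S.P x := by
        obtain ⟨t, ht⟩ := exists_cons_of_head? (S.hP x).head?
        rw [ht]
        rfl
      rw [hPeq] at happ
      exact happ.symm.trans h3
    have E := hc2 (g i) D hDwalk hDtightα x hx Wl.reverse hWl.rev
    have e1 : ((Wl.reverse).map α).reverse = A := by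
      rw [List.map_reverse, List.reverse_reverse]
    have e2 : (Wl.reverse).map β = B.reverse := by
      rw [List.map_reverse]
    rw [wcomp_def, e1, e2] at E
    -- E : PiEq Q (A ++ B.reverse.tail)
    have hsub : PiEq (conj α β Wl Q) (α x :: (B.reverse.tail ++ B.tail)) := by
      have u3 : PiEq (A.reverse ++ Q.tail) (A.reverse ++ (A ++ B.reverse.tail).tail) :=
        pe_glue_right E (by rw [List.getLast?_reverse, hA.head?, hQ.head?])
      rw [tail_append_left hA.ne_nil] at u3
      have u3' := pe_app_right u3 B.tail
      simp only [List.append_assoc] at u3'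
      have u5 := pe_app_right (pe_rev_self A (α x) hA.getLast?)
        (B.reverse.tail ++ B.tail)
      simp only [List.append_assoc, List.singleton_append] at u5
      have hc : conj α β Wl Q = A.reverse ++ (Q.tail ++ B.tail) := by
        show (A.reverse ++ Q.tail) ++ B.tail = _
        rw [List.append_assoc]
      rw [hc]
      exact u3'.trans u5
    have hβXX : PiEq (β x :: (B.reverse.tail ++ B.tail)) [β x] := by
      have h := pe_rev_self B (β x) hB.getLast?
      have hBr : B.reverse = β x :: B.reverse.tail := by
        obtain ⟨T, hT⟩ := exists_cons_of_head?
          (show B.reverse.head? = some (β x) by rw [List.head?_reverse, hB.getLast?])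
        rw [hT]
        rfl
      rw [hBr] at h
      simpa using h
    have := cond2_shape (S.hPred x) (hPx.trans hsub) hβXX
    rw [hfrα x hx] at this
    exact this
  -- typed shapes along the chain
  have hshapeg : ∀ n, i ≤ n → (S.P (g n) = [a n, β (g n)] ∧ a n ≠ β (g n)) ∨
      (∃ y, S.P (g n) = [a n, y, β (g n)] ∧ a n ≠ y ∧ y ≠ β (g n) ∧ a n ≠ β (g n)) := by
    intro n hn
    rcases hshape (g n) (hmemD n hn) with h1 | h2 | h3
    · exfalso
      have := hg2 n
      rw [h1] at this
      simp at this
    · exact Or.inl h2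
    · exact Or.inr h3
  -- the diamond relation
  have hdia : ∀ k, i ≤ k + 1 →
      PiEq [a (k + 1), β (g k)] [a (k + 1), β (g (k + 2)), β (g (k + 1)), β (g k)] := by
    intro k hk
    obtain ⟨W0, hW0⟩ := hGconn q (g k)
    have hWr : IsWalk G (g k) q W0.reverse := hW0.rev
    have hadjK : G.UAdj (g (k + 1)) (g k) := (hspec k).1.symm
    set W₁ : List V := g (k + 1) :: W0.reverse with hW₁def
    have hW₁ : IsWalk G (g (k + 1)) q W₁ := isWalk_cons hadjK hWr
    set W₂ : List V := g (k + 1) :: g (k + 2) :: W₁ with hW₂def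
    have hW₂ : IsWalk G (g (k + 1)) q W₂ :=
      isWalk_cons (by simpa using (hspec (k + 1)).1)
        (isWalk_cons (by exact ((hspec (k + 1)).1).symm) hW₁)
    have hgKD : g (k + 1) ∈ D := hmemD (k + 1) hk
    have E1 := hc2 (g i) D hDwalk hDtightα (g (k + 1)) hgKD W₁ hW₁
    have E2 := hc2 (g i) D hDwalk hDtightα (g (k + 1)) hgKD W₂ hW₂
    set A := W₁.map α with hAdef
    set B := W₁.map β with hBdef
    have hA : IsWalk H (α (g (k + 1))) (α q) A := hW₁.map_walk hα
    have hB : IsWalk H (β (g (k + 1))) (β q) B := hW₁.map_walk hβ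
    have hmap2 : (W₂.map α).reverse = A.reverse ++ [α (g (k + 2)), α (g (k + 1))] := by
      rw [hW₂def, hAdef]
      simp
    have hmap2' : (W₂.map β).tail = β (g (k + 2)) :: B := by
      rw [hW₂def, hBdef]
      simp
    rw [wcomp_def, hmap2, hmap2'] at E2
    have E2' : PiEq Q (A.reverse ++
        (α (g (k + 2)) :: α (g (k + 1)) :: β (g (k + 2)) :: B)) := by
      rw [List.append_assoc] at E2
      exact E2
    have E1' : PiEq Q (A.reverse ++ B.tail) := E1
    have hAlast : A.reverse.getLast? = some (α (g (k + 1))) := by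
      rw [List.getLast?_reverse, hA.head?]
    have hBt : B.tail.head? = some (β (g k)) := by
      rw [hBdef, hW₁def]
      simp only [List.map_cons, List.tail_cons]
      exact (hWr.map_walk hβ).head?
    have hdd := diamond_rel hAlast hB.head? hBt E1' E2'
    rw [hfrα (g (k + 1)) hgKD] at hdd
    -- also rewrite α (g (k+2)) irrelevant (appears only as au, which diamond discards)
    exact hdd
  -- case split on shape types
  by_cases hex : ∃ N, i ≤ N ∧ (∃ y, S.P (g N) = [a N, y, β (g N)] ∧ a N ≠ y ∧
      y ≠ β (g N) ∧ a N ≠ β (g N))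
  · -- type 3 everywhere beyond N
    obtain ⟨N, hNi, hN3⟩ := hex
    have hall3 : ∀ n, N ≤ n → (∃ y, S.P (g n) = [a n, y, β (g n)] ∧ a n ≠ y ∧
        y ≠ β (g n) ∧ a n ≠ β (g n)) := by
      intro n hn
      induction n, hn using Nat.le_induction with
      | base => exact hN3
      | succ n hn ih =>
        rcases hshapeg (n + 1) (by omega) with h2 | h3
        · exfalso
          obtain ⟨y, hPu, hy1, hy2, hy3⟩ := ih
          have hb2 : β (g (n + 1)) = a n := by
            have := (hspec n).2.1
            rw [h2.1] at this
            simpa using this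
          have hpe := S.hI2 (g n) (g (n + 1)) (hspec n).1
          rw [hPu, h2.1, hb2] at hpe
          exact pair_32_false hy1 hy2 hy3 (ha1 n) hpe
        · exact h3
    have hβ3 : ∀ n, N ≤ n → β (g (n + 2)) = a n := by
      intro n hn
      obtain ⟨y1, hP1, c11, c12, c13⟩ := hall3 (n + 1) (by omega)
      obtain ⟨y2, hP2, c21, c22, c23⟩ := hall3 (n + 2) (by omega)
      have hy1 : y1 = a n := by
        have := (hspec n).2.1
        rw [hP1] at this
        simpa using this
      have hy2 : y2 = a (n + 1) := by
        have := (hspec (n + 1)).2.1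
        rw [hP2] at this
        simpa using this
      have hpe := S.hI2 (g (n + 1)) (g (n + 2)) (hspec (n + 1)).1
      rw [hP1, hP2, hy2] at hpe
      have hbw := pair_33 c11 c12 c13 (ha1 (n + 1)) (hy2 ▸ c22) c23 hpe
      rw [hbw, hy1]
    -- kill
    have hrel := hdia (N + 2) (by omega)
    rw [show N + 2 + 2 = (N + 2) + 2 from rfl] at hrel
    rw [hβ3 (N + 2) (by omega), hβ3 (N + 1) (by omega), hβ3 N (by omega)] at hrel
    refine kill_gen hrel (isReduced4 ?_ ?_ ?_ ?_ ?_) (by simp)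
    · exact ha1 (N + 2)
    · exact ha1 (N + 1)
    · exact ha1 N
    · exact ha2 (N + 1)
    · exact ha2 N
  · -- type 2 everywhere
    push_neg at hex
    have hall2 : ∀ n, i ≤ n → S.P (g n) = [a n, β (g n)] ∧ a n ≠ β (g n) := by
      intro n hn
      rcases hshapeg n hn with h2 | h3
      · exact h2
      · exact absurd h3 (by simpa using hex n hn)
    have hβ2 : ∀ n, i ≤ n → β (g (n + 1)) = a n := by
      intro n hn
      have := (hspec n).2.1
      rw [(hall2 (n + 1) (by omega)).1] at this
      simpa using this
    have hrel := hdia (i + 1) (by omega)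
    rw [hβ2 (i + 2) (by omega), hβ2 (i + 1) (by omega), hβ2 i (by omega)] at hrel
    have hrel2 := hrel.trans (pe_dd (a (i + 2)) [a (i + 1), a i])
    refine kill_gen hrel2 (isReduced3 ?_ ?_ ?_) (by simp)
    · exact ha1 (i + 1)
    · exact ha1 i
    · exact ha2 i


lemma bstate_finish (S : BState G H α β q Q) (hQ : IsWalk H (α q) (β q) Q)
    (hall : ∀ v, wlen (S.P v) = 0) : PRealizable G H α β q Q := by
  have hone : ∀ v, S.P v = [S.σ v] := by
    intro v
    obtain ⟨t, ht⟩ := exists_cons_of_head? (S.hP v).head?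
    have hlen := hall v
    rw [ht] at hlen ⊢
    simp [wlen] at hlen
    rw [hlen]
  have hσβ : S.σ = β := by
    funext v
    have := (S.hP v).getLast?
    rw [hone v] at this
    simpa using this
  refine ⟨S.τ, S.hA, S.h0, by rw [S.hL, hσβ], S.hpp, ?_⟩
  have h3 := S.hI3 q [q] (isWalk_singleton G q)
  rw [hone q] at h3
  simp only [List.tail_cons, List.append_nil] at h3
  have hconj : conj α β [q] Q = α q :: Q.tail := by
    show (([α q] : List X).reverse ++ Q.tail) ++ ([β q] : List X).tail = _
    simp
  have hQeq : Q = α q :: Q.tail := by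
    obtain ⟨t, ht⟩ := exists_cons_of_head? hQ.head?
    rw [ht]
    rfl
  rw [hconj, ← hQeq] at h3
  exact h3

lemma bstate_realize [Fintype V] (hHsym : H.IsSymmetric) (hHrefl : H.IsReflexive)
    (hGconn : G.WConn) (hα : IsHom G H α) (hβ : IsHom G H β)
    (hQ : IsWalk H (α q) (β q) Q)
    (hc2 : ∀ (v₀ : V) (C : List V), IsWalk G v₀ v₀ C → IsCycReduced (C.map α) →
      ∀ v ∈ C, ∀ Wl : List V, IsWalk G v q Wl →
        PiEq Q (wcomp (Wl.map α).reverse (Wl.map β))) :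
    ∀ (n : ℕ) (S : BState G H α β q Q), (∑ u, wlen (S.P u)) ≤ n →
      PRealizable G H α β q Q := by
  intro n
  induction n with
  | zero =>
    intro S hS
    refine bstate_finish S hQ (fun v => ?_)
    have hz : (∑ u, wlen (S.P u)) = 0 := Nat.le_zero.mp hS
    exact Finset.sum_eq_zero_iff.mp hz v (Finset.mem_univ v)
  | succ n ih =>
    intro S hS
    by_cases hall : ∀ v, wlen (S.P v) = 0
    · exact bstate_finish S hQ hall
    · by_cases hmv : ∃ (v : V) (b : X) (rest : List X),
          S.P v = S.σ v :: b :: rest ∧ ∀ w, G.UAdj v w → S.σ w = S.σ v ∨ S.σ w = b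
      · obtain ⟨v, b, rest, hPv, hmov⟩ := hmv
        obtain ⟨S', hS'⟩ := bstate_step hHsym hHrefl S hPv hmov
        exact ih S' (by omega)
      · exact (bstate_deadlock hGconn hα hβ hQ hc2 S hall hmv).elim


end Seqs

end HRecoloring

open HRecoloring
/-- Characterization of realizable walks for reflexive undirected graphs: a
reduced walk `Q` from `α q` to `β q` is `H`-realizable for `α, β, q` iff it is
topologically valid and, for every `α`-tight closed walk, every vertex `v` on
it and every walk `W` from `v` to `q`, `Q = α(W)⁻¹ · β(W)` in `π(H)`. -/
theorem statement15 {V X : Type} [Fintype V] [Fintype X]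
    (G : Dgraph V) (H : Dgraph X)
    (hGrefl : G.IsReflexive) (hGsym : G.IsSymmetric)
    (hHrefl : H.IsReflexive) (hHsym : H.IsSymmetric)
    (hGconn : G.WConn) (hHconn : H.WConn)
    (α β : V → X) (hα : IsHom G H α) (hβ : IsHom G H β)
    (q : V) (Q : List X)
    (hQ : IsWalk H (α q) (β q) Q) (hQred : IsReduced Q) :
    PRealizable G H α β q Q ↔
      (TopValid G H α β q Q ∧
       ∀ (v₀ : V) (C : List V), IsWalk G v₀ v₀ C → IsCycReduced (C.map α) →
         ∀ v ∈ C, ∀ Wl : List V, IsWalk G v q Wl →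
           PiEq Q (wcomp (Wl.map α).reverse (Wl.map β))) := by
  constructor
  · rintro ⟨σs, hA, h0, hL, hpp, hpe⟩
    exact ⟨forward_topvalid hA hpp h0 hL hα hβ hQ hpe,
      forward_cond2 hA hpp h0 hL hα hβ hQ hpe⟩
  · rintro ⟨htv, hc2⟩
    obtain ⟨S⟩ := bstate_init htv hα hβ hQ hGconn
    exact bstate_realize hHsym hHrefl hGconn hα hβ hQ hc2 (∑ u, wlen (S.P u)) S le_rfl
end
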